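/- arXiv:1511.01207 — 10 statements merged into one kernel-verified Lean document; each statement's English description precedes it below -/
import Mathlib

section
/- Let ℳ = 𝒮 × ℋ be a bounded discrete market (for each H ∈ ℋ there exists n(H) with N_H(S) ≤ n(H) for all S ∈ 𝒮), let Z : 𝒮 → ℝ, fix S ∈ 𝒮 and k ≥ 0. If every node (S̃, j) with S̃ ∈ 𝒮_(S,k) and j ≥ k is 0-neutral, then V̲_k(S, Z, ℳ) ≤ V̄_k(S, Z, ℳ). -/
open scoped BigOperators

structure Portfolio where
  pos : ℕ → (ℕ → ℝ) → ℝ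
  N : (ℕ → ℝ) → ℕ

structure Market where
  s0 : ℝ
  T : Set (ℕ → ℝ)
  P : Set Portfolio
  start : ∀ S ∈ T, S 0 = s0
  nonanticipative : ∀ H ∈ P, ∀ i : ℕ, ∀ S ∈ T, ∀ S' ∈ T,
    (∀ k ≤ i, S k = S' k) → H.pos i S = H.pos i S'
  liquidate : ∀ H ∈ P, ∀ S ∈ T, ∀ k : ℕ, H.N S ≤ k → H.pos k S = 0
  zero_mem : (⟨fun _ _ => 0, fun _ => 0⟩ : Portfolio) ∈ P

def StoppingTime (T : Set (ℕ → ℝ)) (ν : (ℕ → ℝ) → ℕ) : Prop :=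
  ∀ S ∈ T, ∀ S' ∈ T, (∀ k ≤ ν S, S' k = S k) → ν S' = ν S

namespace Market

/-- The conditional trajectory set `𝒮_(S,k)`. -/
def cond (M : Market) (S : ℕ → ℝ) (k : ℕ) : Set (ℕ → ℝ) :=
  {S' | S' ∈ M.T ∧ ∀ i ≤ k, S' i = S i}

/-- The conditional upper minmax bound `V̄_k(S, Z, ℳ)`. -/
noncomputable def Vbar (M : Market) (k : ℕ) (S : ℕ → ℝ) (Z : (ℕ → ℝ) → ℝ) : EReal :=
  ⨅ H ∈ M.P, ⨆ S' ∈ M.cond S k,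
    ((Z S' - ∑ i ∈ Finset.Ico k (H.N S'), H.pos i S' * (S' (i + 1) - S' i) : ℝ) : EReal)

/-- The conditional lower minmax bound `V̲_k(S, Z, ℳ) = -V̄_k(S, -Z, ℳ)`. -/
noncomputable def Vlow (M : Market) (k : ℕ) (S : ℕ → ℝ) (Z : (ℕ → ℝ) → ℝ) : EReal :=
  - M.Vbar k S (fun S' => - Z S')

/-- The node `(S, j)` is 0-neutral. -/
def ZeroNeutralNode (M : Market) (S : ℕ → ℝ) (j : ℕ) : Prop :=
  0 ≤ (⨆ S' ∈ M.cond S j, ((S' (j + 1) - S j : ℝ) : EReal)) ∧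
    (⨅ S' ∈ M.cond S j, ((S' (j + 1) - S j : ℝ) : EReal)) ≤ 0

/-- The node `(S, j)` satisfies the up-down property. -/
def UpDownNode (M : Market) (S : ℕ → ℝ) (j : ℕ) : Prop :=
  0 < (⨆ S' ∈ M.cond S j, ((S' (j + 1) - S j : ℝ) : EReal)) ∧
    (⨅ S' ∈ M.cond S j, ((S' (j + 1) - S j : ℝ) : EReal)) < 0

/-- Positive arbitrage node. -/
def PosArbNode (M : Market) (S : ℕ → ℝ) (j : ℕ) : Prop :=
  0 < (⨆ S' ∈ M.cond S j, ((S' (j + 1) - S j : ℝ) : EReal)) ∧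
    (⨅ S' ∈ M.cond S j, ((S' (j + 1) - S j : ℝ) : EReal)) = 0

/-- Negative arbitrage node. -/
def NegArbNode (M : Market) (S : ℕ → ℝ) (j : ℕ) : Prop :=
  (⨆ S' ∈ M.cond S j, ((S' (j + 1) - S j : ℝ) : EReal)) = 0 ∧
    (⨅ S' ∈ M.cond S j, ((S' (j + 1) - S j : ℝ) : EReal)) < 0

def LocallyZeroNeutral (M : Market) : Prop :=
  ∀ S ∈ M.T, ∀ j : ℕ, M.ZeroNeutralNode S j

/-- `ℳ` is `n`-bounded. -/
def NBounded (M : Market) (n : ℕ) : Prop :=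
  ∀ H ∈ M.P, ∀ S ∈ M.T, H.N S ≤ n

/-- `M(S) = sup_{H ∈ ℋ} N_H(S)`. -/
noncomputable def Mx (M : Market) (S : ℕ → ℝ) : ℕ :=
  sSup ((fun H : Portfolio => H.N S) '' M.P)

/-- `I^k_S = {H_k(S) : H ∈ ℋ}`. -/
def Iset (M : Market) (k : ℕ) (S : ℕ → ℝ) : Set ℝ :=
  {u : ℝ | ∃ H ∈ M.P, H.pos k S = u}

/-- `U` is the family of dynamic bounds `Ū_i(·, Z, ℳ)` (EReal-valued version,
with the local infimum taken over portfolios). -/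
def IsDynU (M : Market) (Z : (ℕ → ℝ) → ℝ) (U : ℕ → (ℕ → ℝ) → EReal) : Prop :=
  ∀ S ∈ M.T,
    (∀ i : ℕ, M.Mx S < i → U i S = 0) ∧
    U (M.Mx S) S = (Z S : EReal) ∧
    ∀ i : ℕ, i < M.Mx S →
      U i S = ⨅ H ∈ M.P, ⨆ S' ∈ M.cond S i,
        (U (i + 1) S' - ((H.pos i S * (S' (i + 1) - S i) : ℝ) : EReal))

/-- `U` is the family of dynamic bounds `Ū_i(·, Z, ℳ)` (finite, real-valued version,
with the local infimum taken over `I^i_S`). -/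
def IsDynUR (M : Market) (Z : (ℕ → ℝ) → ℝ) (U : ℕ → (ℕ → ℝ) → ℝ) : Prop :=
  ∀ S ∈ M.T,
    (∀ i : ℕ, M.Mx S < i → U i S = 0) ∧
    U (M.Mx S) S = Z S ∧
    ∀ i : ℕ, i < M.Mx S →
      ((U i S : ℝ) : EReal) = ⨅ u ∈ M.Iset i S, ⨆ S' ∈ M.cond S i,
        ((U (i + 1) S' - u * (S' (i + 1) - S i) : ℝ) : EReal)

/-- `ℳ` is u-complete with respect to `Z` (relative to the dynamic bounds `U`). -/
def UComplete (M : Market) (Z : (ℕ → ℝ) → ℝ) (U : ℕ → (ℕ → ℝ) → EReal) : Prop :=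
  ∀ S ∈ M.T, ∀ k : ℕ, 1 ≤ k → k < M.Mx S →
    ∃ H ∈ M.P, U k S = ⨆ S' ∈ M.cond S k,
      (U (k + 1) S' - ((H.pos k S * (S' (k + 1) - S k) : ℝ) : EReal))

/-- The portfolio set of `ℳ` is FULL. -/
def IsFULL (M : Market) : Prop :=
  ∀ k : ℕ, ∀ Sstar ∈ M.T, ∀ j : ℕ, k ≤ j →
    ∀ f : (ℕ → ℝ) → ℝ,
      (∀ S ∈ M.cond Sstar k, ∃ H ∈ M.P, ∃ S' ∈ M.cond Sstar k, H.pos j S' = f S) →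
      (∀ S ∈ M.cond Sstar k, ∀ S' ∈ M.cond Sstar k, (∀ l ≤ j, S l = S' l) → f S = f S') →
      ∃ H ∈ M.P, ∀ S ∈ M.cond Sstar k, H.pos j S = f S

/-- `𝒮⁺_(S,i)`. -/
def Splus (M : Market) (S : ℕ → ℝ) (i : ℕ) : Set (ℕ → ℝ) :=
  {S' | S' ∈ M.cond S i ∧ S i < S' (i + 1)}

/-- `𝒮⁻_(S,i)`. -/
def Sminus (M : Market) (S : ℕ → ℝ) (i : ℕ) : Set (ℕ → ℝ) :=
  {S' | S' ∈ M.cond S i ∧ S' (i + 1) ≤ S i}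

/-- `𝒮⁺_(S,i)` with the strict inequality interchanged. -/
def SplusAlt (M : Market) (S : ℕ → ℝ) (i : ℕ) : Set (ℕ → ℝ) :=
  {S' | S' ∈ M.cond S i ∧ S i ≤ S' (i + 1)}

/-- `𝒮⁻_(S,i)` with the strict inequality interchanged. -/
def SminusAlt (M : Market) (S : ℕ → ℝ) (i : ℕ) : Set (ℕ → ℝ) :=
  {S' | S' ∈ M.cond S i ∧ S' (i + 1) < S i}

/-- `𝒮^=_(S,i)`. -/
def Seq (M : Market) (S : ℕ → ℝ) (i : ℕ) : Set (ℕ → ℝ) :=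
  {S' | S' ∈ M.cond S i ∧ S' (i + 1) = S i}

end Market

/-- The slope `u_(S⁺,S⁻)` of the chord joining the graph points of `Ū_{i+1}`. -/
noncomputable def chSlope (U : ℕ → (ℕ → ℝ) → ℝ) (i : ℕ) (Sp Sm : ℕ → ℝ) : ℝ :=
  (U (i + 1) Sp - U (i + 1) Sm) / (Sp (i + 1) - Sm (i + 1))

namespace Market

/-- The convex hull quantity `L_i(S, Z, ℳ)`. -/
noncomputable def Lval (M : Market) (U : ℕ → (ℕ → ℝ) → ℝ) (S : ℕ → ℝ) (i : ℕ) : EReal :=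
  ⨆ Sp ∈ M.Splus S i, ⨆ Sm ∈ M.Sminus S i,
    ((U (i + 1) Sp - chSlope U i Sp Sm * (Sp (i + 1) - S i) : ℝ) : EReal)

/-- The convex hull quantity `L_i(S, Z, ℳ)` with the roles of the strict and
non-strict inequalities interchanged. -/
noncomputable def LvalAlt (M : Market) (U : ℕ → (ℕ → ℝ) → ℝ) (S : ℕ → ℝ) (i : ℕ) : EReal :=
  ⨆ Sp ∈ M.SplusAlt S i, ⨆ Sm ∈ M.SminusAlt S i,
    ((U (i + 1) Sp - chSlope U i Sp Sm * (Sp (i + 1) - S i) : ℝ) : EReal)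

end Market

/-- The nested supremum appearing in the iterated expression of the global bound:
`nestedSup M H Z r k S` is the `r`-fold nested supremum starting at stage `k` from
the trajectory `S`. -/
noncomputable def nestedSup (M : Market) (H : Portfolio) (Z : (ℕ → ℝ) → ℝ) :
    ℕ → ℕ → (ℕ → ℝ) → EReal
  | 0, _, S => ((Z S : ℝ) : EReal)
  | r + 1, k, S => ⨆ S' ∈ M.cond S k,
      (((-(H.pos k S' * (S' (k + 1) - S' k)) : ℝ) : EReal) + nestedSup M H Z r (k + 1) S')


section PriceIntervalAux

lemma PI.ereal_neg_le_of_nonneg_add (a b : EReal) (h : 0 ≤ a + b) : -b ≤ a := by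
  induction b using EReal.rec with
  | bot => simp [EReal.add_bot] at h
  | top => simp
  | coe r =>
    induction a using EReal.rec with
    | bot => simp [EReal.bot_add] at h
    | top => simp
    | coe s =>
      rw [← EReal.coe_add] at h
      rw [← EReal.coe_neg, EReal.coe_le_coe_iff]
      have := EReal.coe_nonneg.mp h
      linarith

lemma PI.cond_self (M : Market) {S : ℕ → ℝ} (hS : S ∈ M.T) (k : ℕ) : S ∈ M.cond S k :=
  ⟨hS, fun _ _ => rfl⟩

lemma PI.cond_mem_T {M : Market} {S S' : ℕ → ℝ} {k : ℕ} (h : S' ∈ M.cond S k) : S' ∈ M.T := h.1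

lemma PI.cond_trans {M : Market} {S S' S'' : ℕ → ℝ} {k j : ℕ} (hk : k ≤ j)
    (h1 : S' ∈ M.cond S k) (h2 : S'' ∈ M.cond S' j) : S'' ∈ M.cond S k :=
  ⟨h2.1, fun i hi => (h2.2 i (hi.trans hk)).trans (h1.2 i hi)⟩

/-- Step lemma: at a 0-neutral node we can make the one-step gain small. -/
lemma PI.step (M : Market) (S' : ℕ → ℝ) (hS' : S' ∈ M.T) (j : ℕ)
    (hzn : M.ZeroNeutralNode S' j) (c δ : ℝ) (hδ : 0 < δ) :
    ∃ S'' ∈ M.cond S' j, c * (S'' (j + 1) - S' j) ≤ δ := by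
  rcases lt_trichotomy c 0 with hc | hc | hc
  · -- c < 0 : use the supremum part
    have hlt : ((δ / c : ℝ) : EReal) < ⨆ S'' ∈ M.cond S' j, ((S'' (j + 1) - S' j : ℝ) : EReal) :=
      lt_of_lt_of_le (by exact_mod_cast div_neg_of_pos_of_neg hδ hc) hzn.1
    simp only [lt_iSup_iff] at hlt
    obtain ⟨S'', hmem, hval⟩ := hlt
    refine ⟨S'', hmem, ?_⟩
    have hval' : δ / c < S'' (j + 1) - S' j := by exact_mod_cast hval
    have := mul_lt_mul_of_neg_left hval' hc
    rw [mul_div_cancel₀ _ (ne_of_lt hc)] at this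
    linarith
  · exact ⟨S', PI.cond_self M hS' j, by simp [hc, hδ.le]⟩
  · -- c > 0 : use the infimum part
    have hlt : (⨅ S'' ∈ M.cond S' j, ((S'' (j + 1) - S' j : ℝ) : EReal)) < ((δ / c : ℝ) : EReal) :=
      lt_of_le_of_lt hzn.2 (by exact_mod_cast div_pos hδ hc)
    simp only [iInf_lt_iff] at hlt
    obtain ⟨S'', hmem, hval⟩ := hlt
    refine ⟨S'', hmem, ?_⟩
    have hval' : S'' (j + 1) - S' j < δ / c := by exact_mod_cast hval
    have := mul_lt_mul_of_pos_left hval' hc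
    rw [mul_div_cancel₀ _ (ne_of_gt hc)] at this
    linarith

/-- Iterated construction: a trajectory along which the accumulated gain is small. -/
lemma PI.build (M : Market) (F : ℕ → (ℕ → ℝ) → ℝ)
    (hF : ∀ i : ℕ, ∀ A ∈ M.T, ∀ B ∈ M.T, (∀ l ≤ i, A l = B l) → F i A = F i B)
    (S : ℕ → ℝ) (k : ℕ)
    (h0 : ∀ S' ∈ M.cond S k, ∀ j : ℕ, k ≤ j → M.ZeroNeutralNode S' j)
    (δ : ℝ) (hδ : 0 < δ) :
    ∀ m : ℕ, ∀ j : ℕ, k ≤ j → ∀ S' ∈ M.cond S k,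
      ∃ Sst ∈ M.cond S' j,
        ∑ i ∈ Finset.Ico j (j + m), F i Sst * (Sst (i + 1) - Sst i) ≤ (m : ℝ) * δ := by
  intro m
  induction m with
  | zero =>
    intro j hj S' hS'
    exact ⟨S', PI.cond_self M hS'.1 j, by simp⟩
  | succ m ih =>
    intro j hj S' hS'
    obtain ⟨S'', hS''c, hS''g⟩ :=
      PI.step M S' hS'.1 j (h0 S' hS' j hj) (F j S') δ hδ
    have hS''k : S'' ∈ M.cond S k := PI.cond_trans hj hS' hS''c
    obtain ⟨Sst, hSstc, hSstg⟩ := ih (j + 1) (hj.trans (Nat.le_succ j)) S'' hS''k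
    have hSstS' : Sst ∈ M.cond S' j :=
      ⟨hSstc.1, fun i hi => (hSstc.2 i (hi.trans (Nat.le_succ j))).trans (hS''c.2 i hi)⟩
    refine ⟨Sst, hSstS', ?_⟩
    have hsplit : ∑ i ∈ Finset.Ico j (j + (m + 1)), F i Sst * (Sst (i + 1) - Sst i)
        = F j Sst * (Sst (j + 1) - Sst j)
          + ∑ i ∈ Finset.Ico (j + 1) (j + (m + 1)), F i Sst * (Sst (i + 1) - Sst i) :=
      Finset.sum_eq_sum_Ico_succ_bot (by omega) _
    have hFj : F j Sst = F j S' := by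
      refine hF j Sst hSstc.1 S' hS'.1 fun l hl => ?_
      exact (hSstc.2 l (hl.trans (Nat.le_succ j))).trans (hS''c.2 l hl)
    have h1 : Sst (j + 1) = S'' (j + 1) := hSstc.2 (j + 1) le_rfl
    have h2 : Sst j = S' j := (hSstc.2 j (Nat.le_succ j)).trans (hS''c.2 j le_rfl)
    have hterm : F j Sst * (Sst (j + 1) - Sst j) ≤ δ := by
      rw [hFj, h1, h2]; exact hS''g
    have htail : ∑ i ∈ Finset.Ico (j + 1) (j + (m + 1)), F i Sst * (Sst (i + 1) - Sst i)
        ≤ (m : ℝ) * δ := by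
      have : j + (m + 1) = (j + 1) + m := by omega
      rw [this]; exact hSstg
    rw [hsplit]; push_cast; linarith

end PriceIntervalAux

/-- Price interval theorem: in a bounded discrete market, if every node
`(S̃, j)` with `S̃ ∈ 𝒮_(S,k)` and `j ≥ k` is 0-neutral, then
`V̲_k(S, Z, ℳ) ≤ V̄_k(S, Z, ℳ)`. -/
theorem price_interval (M : Market)
    (hbdd : ∀ H ∈ M.P, ∃ n : ℕ, ∀ S ∈ M.T, H.N S ≤ n)
    (Z : (ℕ → ℝ) → ℝ) (S : ℕ → ℝ) (hS : S ∈ M.T) (k : ℕ)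
    (h0 : ∀ S' ∈ M.cond S k, ∀ j : ℕ, k ≤ j → M.ZeroNeutralNode S' j) :
    M.Vlow k S Z ≤ M.Vbar k S Z := by
  have key : ∀ H ∈ M.P, ∀ G ∈ M.P, (0 : EReal) ≤
      (⨆ S' ∈ M.cond S k,
        ((Z S' - ∑ i ∈ Finset.Ico k (H.N S'), H.pos i S' * (S' (i + 1) - S' i) : ℝ) : EReal))
      + (⨆ S' ∈ M.cond S k,
        ((-Z S' - ∑ i ∈ Finset.Ico k (G.N S'), G.pos i S' * (S' (i + 1) - S' i) : ℝ) : EReal)) := by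
    intro H hH G hG
    refine le_of_forall_lt_imp_le_of_dense fun c hc => ?_
    obtain ⟨r, hcr, hr0⟩ := EReal.exists_between_coe_real hc
    have hr0' : r < 0 := by exact_mod_cast hr0
    obtain ⟨nH, hnH⟩ := hbdd H hH
    obtain ⟨nG, hnG⟩ := hbdd G hG
    set n : ℕ := max nH nG with hn
    set δ : ℝ := (-r) / (n + 1) with hδdef
    have hδ : 0 < δ := div_pos (by linarith) (by positivity)
    set F : ℕ → (ℕ → ℝ) → ℝ := fun i S' => H.pos i S' + G.pos i S' with hFdef
    have hF : ∀ i : ℕ, ∀ A ∈ M.T, ∀ B ∈ M.T, (∀ l ≤ i, A l = B l) → F i A = F i B := by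
      intro i X hX Y hY hXY
      simp only [hFdef]
      rw [M.nonanticipative H hH i X hX Y hY hXY, M.nonanticipative G hG i X hX Y hY hXY]
    obtain ⟨Sst, hSstc, hSstg⟩ :=
      PI.build M F hF S k h0 δ hδ n k le_rfl S (PI.cond_self M hS k)
    have hsumH : ∑ i ∈ Finset.Ico k (H.N Sst), H.pos i Sst * (Sst (i + 1) - Sst i)
        = ∑ i ∈ Finset.Ico k (k + n), H.pos i Sst * (Sst (i + 1) - Sst i) := by
      refine Finset.sum_subset (Finset.Ico_subset_Ico le_rfl ?_) ?_
      · have := hnH Sst hSstc.1; omega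
      · intro i hi hni
        simp only [Finset.mem_Ico] at hi hni
        have hNi : H.N Sst ≤ i := by omega
        rw [M.liquidate H hH Sst hSstc.1 i hNi, zero_mul]
    have hsumG : ∑ i ∈ Finset.Ico k (G.N Sst), G.pos i Sst * (Sst (i + 1) - Sst i)
        = ∑ i ∈ Finset.Ico k (k + n), G.pos i Sst * (Sst (i + 1) - Sst i) := by
      refine Finset.sum_subset (Finset.Ico_subset_Ico le_rfl ?_) ?_
      · have := hnG Sst hSstc.1; omega
      · intro i hi hni
        simp only [Finset.mem_Ico] at hi hni
        have hNi : G.N Sst ≤ i := by omega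
        rw [M.liquidate G hG Sst hSstc.1 i hNi, zero_mul]
    have hsumF : ∑ i ∈ Finset.Ico k (H.N Sst), H.pos i Sst * (Sst (i + 1) - Sst i)
        + ∑ i ∈ Finset.Ico k (G.N Sst), G.pos i Sst * (Sst (i + 1) - Sst i)
        ≤ (n : ℝ) * δ := by
      rw [hsumH, hsumG, ← Finset.sum_add_distrib]
      calc ∑ i ∈ Finset.Ico k (k + n),
              (H.pos i Sst * (Sst (i + 1) - Sst i) + G.pos i Sst * (Sst (i + 1) - Sst i))
          = ∑ i ∈ Finset.Ico k (k + n), F i Sst * (Sst (i + 1) - Sst i) := by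
            refine Finset.sum_congr rfl fun i _ => ?_
            simp only [hFdef]; ring
        _ ≤ (n : ℝ) * δ := hSstg
    have hnδ : (n : ℝ) * δ ≤ -r := by
      have h1 : (n : ℝ) * δ = ((n : ℝ) / (n + 1)) * (-r) := by
        rw [hδdef]; ring
      have h2 : ((n : ℝ) / (n + 1)) ≤ 1 := by
        rw [div_le_one (by positivity)]; linarith
      rw [h1]
      exact mul_le_of_le_one_left (by linarith) h2
    have hxy : r ≤ (Z Sst - ∑ i ∈ Finset.Ico k (H.N Sst), H.pos i Sst * (Sst (i + 1) - Sst i))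
        + (-Z Sst - ∑ i ∈ Finset.Ico k (G.N Sst), G.pos i Sst * (Sst (i + 1) - Sst i)) := by
      linarith
    have hxA : ((Z Sst - ∑ i ∈ Finset.Ico k (H.N Sst), H.pos i Sst * (Sst (i + 1) - Sst i) : ℝ)
          : EReal)
        ≤ ⨆ S' ∈ M.cond S k,
          ((Z S' - ∑ i ∈ Finset.Ico k (H.N S'), H.pos i S' * (S' (i + 1) - S' i) : ℝ) : EReal) :=
      le_iSup₂ (f := fun S' (_ : S' ∈ M.cond S k) =>
        ((Z S' - ∑ i ∈ Finset.Ico k (H.N S'), H.pos i S' * (S' (i + 1) - S' i) : ℝ) : EReal))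
        Sst hSstc
    have hyA : ((-Z Sst - ∑ i ∈ Finset.Ico k (G.N Sst), G.pos i Sst * (Sst (i + 1) - Sst i) : ℝ)
          : EReal)
        ≤ ⨆ S' ∈ M.cond S k,
          ((-Z S' - ∑ i ∈ Finset.Ico k (G.N S'), G.pos i S' * (S' (i + 1) - S' i) : ℝ) : EReal) :=
      le_iSup₂ (f := fun S' (_ : S' ∈ M.cond S k) =>
        ((-Z S' - ∑ i ∈ Finset.Ico k (G.N S'), G.pos i S' * (S' (i + 1) - S' i) : ℝ) : EReal))
        Sst hSstc
    calc c ≤ ((r : ℝ) : EReal) := hcr.le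
      _ ≤ (((Z Sst - ∑ i ∈ Finset.Ico k (H.N Sst), H.pos i Sst * (Sst (i + 1) - Sst i))
            + (-Z Sst - ∑ i ∈ Finset.Ico k (G.N Sst), G.pos i Sst * (Sst (i + 1) - Sst i))
            : ℝ) : EReal) := by exact_mod_cast hxy
      _ = ((Z Sst - ∑ i ∈ Finset.Ico k (H.N Sst), H.pos i Sst * (Sst (i + 1) - Sst i) : ℝ)
            : EReal)
          + ((-Z Sst - ∑ i ∈ Finset.Ico k (G.N Sst), G.pos i Sst * (Sst (i + 1) - Sst i) : ℝ)
            : EReal) := by push_cast; rfl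
      _ ≤ _ := add_le_add hxA hyA
  simp only [Market.Vlow, Market.Vbar]
  refine le_iInf₂ fun H hH => ?_
  rw [EReal.neg_le]
  refine le_iInf₂ fun G hG => ?_
  rw [EReal.neg_le]
  exact PI.ereal_neg_le_of_nonneg_add _ _ (key H hH G hG)
end

section
/- Let ℳ = 𝒮 × ℋ be a bounded discrete market (for each H ∈ ℋ there exists n(H) with N_H(S) ≤ n(H) for all S ∈ 𝒮), let k ≥ 0 and S^k ∈ 𝒮. If every node (S, j) with j ≥ k and S ∈ 𝒮_(S^k,k) is 0-neutral, then ℳ is conditionally 0-neutral at (S^k, k), i.e. V̄_k(S^k, 0, ℳ) = 0 where 0 denotes the identically zero payoff function. -/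
open scoped BigOperators

/-- Key approximation lemma: from stage `j` onward, using 0-neutral nodes, one can find a
conditional trajectory along which the gains of `H` up to time `n` are below `ε`. -/
lemma key_approx (M : Market) (Sk : ℕ → ℝ) (k : ℕ)
    (h0 : ∀ S ∈ M.cond Sk k, ∀ j : ℕ, k ≤ j → M.ZeroNeutralNode S j)
    (H : Portfolio) (hH : H ∈ M.P) (n : ℕ) :
    ∀ d j, n ≤ j + d → k ≤ j → ∀ S ∈ M.cond Sk k, ∀ ε : ℝ, 0 < ε →
      ∃ S' ∈ M.cond S j,
        ∑ i ∈ Finset.Ico j n, H.pos i S' * (S' (i + 1) - S' i) < ε := by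
  intro d
  induction d with
  | zero =>
    intro j hn hkj S hS ε hε
    refine ⟨S, ⟨hS.1, fun i _ => rfl⟩, ?_⟩
    rw [Finset.Ico_eq_empty (by omega)]
    simpa using hε
  | succ d ih =>
    intro j hn hkj S hS ε hε
    by_cases hjn : n ≤ j
    · refine ⟨S, ⟨hS.1, fun i _ => rfl⟩, ?_⟩
      rw [Finset.Ico_eq_empty (by omega)]
      simpa using hε
    push_neg at hjn
    set a := H.pos j S with ha
    set δ : ℝ := ε / (2 * (|a| + 1)) with hδdef
    have hδ : 0 < δ := by positivity
    obtain ⟨hsup, hinf⟩ := h0 S hS j hkj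
    -- find S₁ with a * (S₁ (j+1) - S j) < ε / 2
    have hstep : ∃ S₁ ∈ M.cond S j, a * (S₁ (j + 1) - S j) < ε / 2 := by
      have haδ : |a| * δ < ε / 2 := by
        rw [hδdef, mul_div_assoc', div_lt_div_iff₀ (by positivity) (by norm_num : (0:ℝ) < 2)]
        nlinarith [abs_nonneg a]
      rcases le_or_gt 0 a with hcase | hcase
      · have : (⨅ S' ∈ M.cond S j, ((S' (j + 1) - S j : ℝ) : EReal)) < ((δ : ℝ) : EReal) :=
          lt_of_le_of_lt hinf (by exact_mod_cast hδ)
        rw [iInf_lt_iff] at this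
        obtain ⟨S₁, hlt⟩ := this
        rw [iInf_lt_iff] at hlt
        obtain ⟨hS₁, hlt⟩ := hlt
        refine ⟨S₁, hS₁, ?_⟩
        have hlt' : S₁ (j + 1) - S j < δ := by exact_mod_cast hlt
        have : a * (S₁ (j + 1) - S j) ≤ a * δ := by
          exact mul_le_mul_of_nonneg_left hlt'.le hcase
        calc a * (S₁ (j + 1) - S j) ≤ a * δ := this
          _ ≤ |a| * δ := by
              exact mul_le_mul_of_nonneg_right (le_abs_self a) hδ.le
          _ < ε / 2 := haδ
      · have : ((-δ : ℝ) : EReal) < ⨆ S' ∈ M.cond S j, ((S' (j + 1) - S j : ℝ) : EReal) :=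
          lt_of_lt_of_le (by exact_mod_cast neg_lt_zero.mpr hδ) hsup
        rw [lt_iSup_iff] at this
        obtain ⟨S₁, hlt⟩ := this
        rw [lt_iSup_iff] at hlt
        obtain ⟨hS₁, hlt⟩ := hlt
        refine ⟨S₁, hS₁, ?_⟩
        have hlt' : -δ < S₁ (j + 1) - S j := by exact_mod_cast hlt
        calc a * (S₁ (j + 1) - S j) < a * (-δ) := by
              exact (mul_lt_mul_left_of_neg hcase).mpr hlt'
          _ = -a * δ := by ring
          _ ≤ |a| * δ := by
              exact mul_le_mul_of_nonneg_right (neg_le_abs a) hδ.le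
          _ < ε / 2 := haδ
    obtain ⟨S₁, hS₁, hprod⟩ := hstep
    have hS₁T : S₁ ∈ M.T := hS₁.1
    have hS₁k : S₁ ∈ M.cond Sk k :=
      ⟨hS₁T, fun i hi => (hS₁.2 i (hi.trans hkj)).trans (hS.2 i hi)⟩
    obtain ⟨S', hS', htail⟩ :=
      ih (j + 1) (by omega) (by omega) S₁ hS₁k (ε / 2) (by linarith)
    have hS'T : S' ∈ M.T := hS'.1
    have hagree : ∀ l ≤ j, S' l = S l := fun l hl =>
      (hS'.2 l (by omega)).trans (hS₁.2 l hl)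
    refine ⟨S', ⟨hS'T, hagree⟩, ?_⟩
    rw [Finset.sum_eq_sum_Ico_succ_bot hjn]
    have hpos : H.pos j S' = a :=
      M.nonanticipative H hH j S' hS'T S hS.1 hagree
    have h1 : S' (j + 1) = S₁ (j + 1) := hS'.2 (j + 1) le_rfl
    have h2 : S' j = S j := hagree j le_rfl
    rw [hpos, h1, h2]
    linarith

/-- in a bounded discrete market, if every node `(S, j)` with `j ≥ k` and
`S ∈ 𝒮_(S^k,k)` is 0-neutral, then `ℳ` is conditionally 0-neutral at `(S^k, k)`. -/
theorem conditionally_zero_neutral (M : Market)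
    (hbdd : ∀ H ∈ M.P, ∃ n : ℕ, ∀ S ∈ M.T, H.N S ≤ n)
    (Sk : ℕ → ℝ) (hSk : Sk ∈ M.T) (k : ℕ)
    (h0 : ∀ S ∈ M.cond Sk k, ∀ j : ℕ, k ≤ j → M.ZeroNeutralNode S j) :
    M.Vbar k Sk (fun _ => 0) = 0 := by
  have hSkk : Sk ∈ M.cond Sk k := ⟨hSk, fun i _ => rfl⟩
  apply le_antisymm
  · -- use the zero portfolio
    refine le_trans (iInf₂_le (⟨fun _ _ => 0, fun _ => 0⟩ : Portfolio) M.zero_mem) ?_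
    refine iSup₂_le fun S' _ => ?_
    simp
  · refine le_iInf₂ fun H hH => ?_
    obtain ⟨n, hn⟩ := hbdd H hH
    -- show 0 ≤ biSup
    set b := ⨆ S' ∈ M.cond Sk k,
      (((fun _ : ℕ → ℝ => (0:ℝ)) S' - ∑ i ∈ Finset.Ico k (H.N S'),
        H.pos i S' * (S' (i + 1) - S' i) : ℝ) : EReal) with hb
    have hge : ∀ ε : ℝ, 0 < ε → ((-ε : ℝ) : EReal) ≤ b := by
      intro ε hε
      obtain ⟨S', hS', hsum⟩ :=
        key_approx M Sk k h0 H hH n n k (by omega) le_rfl Sk hSkk ε hε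
      have hNle : H.N S' ≤ n := hn S' hS'.1
      have hsum' : ∑ i ∈ Finset.Ico k (H.N S'), H.pos i S' * (S' (i + 1) - S' i)
          = ∑ i ∈ Finset.Ico k n, H.pos i S' * (S' (i + 1) - S' i) := by
        refine Finset.sum_subset ?_ ?_
        · exact Finset.Ico_subset_Ico le_rfl hNle
        · intro i hi hni
          simp only [Finset.mem_Ico] at hi hni
          have : H.N S' ≤ i := by omega
          rw [M.liquidate H hH S' hS'.1 i this, zero_mul]
      refine le_trans ?_ (le_iSup₂ (f := fun S' (_ : S' ∈ M.cond Sk k) =>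
        (((fun _ : ℕ → ℝ => (0:ℝ)) S' - ∑ i ∈ Finset.Ico k (H.N S'),
          H.pos i S' * (S' (i + 1) - S' i) : ℝ) : EReal)) S' hS')
      rw [hsum']
      have : (-ε : ℝ) ≤ (fun _ : ℕ → ℝ => (0:ℝ)) S' - ∑ i ∈ Finset.Ico k n, H.pos i S' * (S' (i + 1) - S' i) := by
        simp only
        linarith
      exact_mod_cast this
    by_contra hcon
    push_neg at hcon
    obtain ⟨c, hbc, hc0⟩ := exists_between hcon
    induction c with
    | bot => exact absurd hbc (by simp)
    | coe r =>
      have hr0 : r < 0 := by exact_mod_cast hc0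
      exact absurd (hge (-r) (by linarith)) (by rw [neg_neg]; exact not_le.mpr hbc)
    | top => exact absurd hc0 (by simp)
end

section
/- Let ℳ = 𝒮 × ℋ be an n-bounded discrete market and Z ≥ 0 a function defined on 𝒮. If 𝒮 is locally 0-neutral, then for every S ∈ 𝒮 and every 0 ≤ i ≤ n, the dynamic bound satisfies Ū_i(S, Z, ℳ) ≥ 0. -/
open scoped BigOperators

private lemma ereal_nonneg_of_forall_neg_le (x : EReal)
    (h : ∀ ε : ℝ, 0 < ε → ((-ε : ℝ) : EReal) ≤ x) : 0 ≤ x := by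
  by_contra hx
  push_neg at hx
  have hx0 : x < ((0 : ℝ) : EReal) := by simpa using hx
  obtain ⟨r, hxr, hr0⟩ := EReal.lt_iff_exists_real_btwn.mp hx0
  have hrneg : (0:ℝ) < -r := by
    have : (r : EReal) < ((0:ℝ):EReal) := hr0
    have := EReal.coe_lt_coe_iff.mp this
    linarith
  have := h (-r) hrneg
  rw [neg_neg] at this
  exact absurd hxr (not_lt.mpr this)

/-- in an `n`-bounded market with a locally 0-neutral trajectory set and a
nonnegative payoff `Z`, all dynamic bounds are nonnegative: `Ū_i(S, Z, ℳ) ≥ 0`. -/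
theorem dynamic_bounds_nonneg (n : ℕ) (M : Market) (hn : M.NBounded n)
    (Z : (ℕ → ℝ) → ℝ) (hZ : ∀ S ∈ M.T, 0 ≤ Z S)
    (hloc : M.LocallyZeroNeutral)
    (U : ℕ → (ℕ → ℝ) → EReal) (hU : M.IsDynU Z U)
    (S : ℕ → ℝ) (hS : S ∈ M.T) (i : ℕ) (hi : i ≤ n) :
    0 ≤ U i S := by
  have hMxle : ∀ S ∈ M.T, M.Mx S ≤ n := by
    intro S hS
    apply csSup_le
    · exact ⟨0, ⟨⟨fun _ _ => 0, fun _ => 0⟩, M.zero_mem, rfl⟩⟩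
    · rintro m ⟨H, hH, rfl⟩; exact hn H hH S hS
  suffices h : ∀ j : ℕ, ∀ i : ℕ, ∀ S ∈ M.T, n + 1 ≤ i + j → 0 ≤ U i S by
    exact h (n + 1) i S hS (by omega)
  intro j
  induction j with
  | zero =>
    intro i S hS hij
    have : M.Mx S < i := by have := hMxle S hS; omega
    rw [(hU S hS).1 i this]
  | succ j ih =>
    intro i S hS hij
    obtain ⟨h0, h1, h2⟩ := hU S hS
    rcases lt_trichotomy i (M.Mx S) with hlt | heq | hgt
    · rw [h2 i hlt]
      refine le_iInf₂ fun H hH => ?_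
      apply ereal_nonneg_of_forall_neg_le
      intro ε hε
      set u := H.pos i S with hu
      set ε₂ : ℝ := ε / (|u| + 1) with hε₂def
      have habs : (0:ℝ) ≤ |u| := abs_nonneg u
      have hε₂ : 0 < ε₂ := by positivity
      obtain ⟨hsup, hinf⟩ := hloc S hS i
      -- find S' in the conditional set with u * δ ≤ ε
      have key : ∃ S' ∈ M.cond S i, u * (S' (i + 1) - S i) ≤ ε := by
        rcases le_or_gt 0 u with hu0 | hu0
        · -- use the infimum condition
          have hlt2 : (⨅ S' ∈ M.cond S i, ((S' (i + 1) - S i : ℝ) : EReal))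
              < ((ε₂ : ℝ) : EReal) := lt_of_le_of_lt hinf (by exact_mod_cast hε₂)
          rw [iInf_lt_iff] at hlt2
          obtain ⟨S', hlt2⟩ := hlt2
          rw [iInf_lt_iff] at hlt2
          obtain ⟨hS', hlt2⟩ := hlt2
          refine ⟨S', hS', ?_⟩
          have hδ : S' (i + 1) - S i < ε₂ := by exact_mod_cast hlt2
          have : u * (S' (i + 1) - S i) ≤ u * ε₂ := by
            exact mul_le_mul_of_nonneg_left hδ.le hu0
          have h2 : u * ε₂ ≤ |u| * ε₂ := by
            exact mul_le_mul_of_nonneg_right (le_abs_self u) hε₂.le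
          have h3 : |u| * ε₂ ≤ ε := by
            rw [hε₂def]
            rw [mul_div_assoc']
            rw [div_le_iff₀ (by positivity)]
            nlinarith
          linarith
        · -- use the supremum condition
          have hlt2 : ((-ε₂ : ℝ) : EReal)
              < (⨆ S' ∈ M.cond S i, ((S' (i + 1) - S i : ℝ) : EReal)) :=
            lt_of_lt_of_le (by exact_mod_cast neg_neg_iff_pos.mpr hε₂) hsup
          rw [lt_iSup_iff] at hlt2
          obtain ⟨S', hlt2⟩ := hlt2
          rw [lt_iSup_iff] at hlt2
          obtain ⟨hS', hlt2⟩ := hlt2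
          refine ⟨S', hS', ?_⟩
          have hδ : -ε₂ < S' (i + 1) - S i := by exact_mod_cast hlt2
          have : u * (S' (i + 1) - S i) ≤ u * (-ε₂) := by
            exact mul_le_mul_of_nonpos_left hδ.le hu0.le
          have h2 : u * (-ε₂) = -u * ε₂ := by ring
          have h3 : -u * ε₂ ≤ |u| * ε₂ := by
            exact mul_le_mul_of_nonneg_right (neg_le_abs u) hε₂.le
          have h4 : |u| * ε₂ ≤ ε := by
            rw [hε₂def, mul_div_assoc', div_le_iff₀ (by positivity)]
            nlinarith
          linarith
      obtain ⟨S', hS', hle⟩ := key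
      have hS'T : S' ∈ M.T := hS'.1
      have hU' : 0 ≤ U (i + 1) S' := ih (i + 1) S' hS'T (by omega)
      refine le_trans ?_ (le_iSup₂ (f := fun S' (_ : S' ∈ M.cond S i) =>
        U (i + 1) S' - ((u * (S' (i + 1) - S i) : ℝ) : EReal)) S' hS')
      have step1 : ((-ε : ℝ) : EReal) ≤ ((-(u * (S' (i + 1) - S i)) : ℝ) : EReal) := by
        exact_mod_cast neg_le_neg hle
      calc ((-ε : ℝ) : EReal) ≤ ((-(u * (S' (i + 1) - S i)) : ℝ) : EReal) := step1
        _ = 0 - ((u * (S' (i + 1) - S i) : ℝ) : EReal) := by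
            rw [zero_sub]; norm_cast
        _ ≤ U (i + 1) S' - ((u * (S' (i + 1) - S i) : ℝ) : EReal) := by
            exact EReal.sub_le_sub hU' le_rfl
    · rw [← heq] at h1
      rw [h1]
      exact_mod_cast hZ S hS
    · rw [h0 i hgt]
end

section
/- Let ℳ = 𝒮 × ℋ be an n-bounded discrete market. If 𝒮 is locally 0-neutral, then for the identically zero payoff Z = 0 one has U̲₀(s₀, 0, ℳ) = Ū₀(s₀, 0, ℳ) = 0. -/
open scoped BigOperators

lemma Mx_le_of_nbounded (n : ℕ) (M : Market) (hn : M.NBounded n) (S : ℕ → ℝ)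
    (hS : S ∈ M.T) : M.Mx S ≤ n := by
  apply csSup_le
  · exact ⟨_, ⟨_, M.zero_mem, rfl⟩⟩
  · rintro k ⟨H, hH, rfl⟩
    exact hn H hH S hS

lemma dynU_zero (n : ℕ) (M : Market) (hn : M.NBounded n)
    (hloc : M.LocallyZeroNeutral) (Z : (ℕ → ℝ) → ℝ) (hZ : ∀ S, Z S = 0)
    (U : ℕ → (ℕ → ℝ) → EReal) (hU : M.IsDynU Z U) :
    ∀ d i : ℕ, n ≤ i + d → ∀ S ∈ M.T, U i S = 0 := by
  intro d
  induction d with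
  | zero =>
    intro i hi S hS
    obtain ⟨h1, h2, _⟩ := hU S hS
    rcases lt_or_ge (M.Mx S) i with h | h
    · exact h1 i h
    · have hMx : M.Mx S = i :=
        le_antisymm (le_trans (Mx_le_of_nbounded n M hn S hS) (by omega)) h
      rw [← hMx, h2, hZ S]; rfl
  | succ d IH =>
    intro i hi S hS
    obtain ⟨h1, h2, h3⟩ := hU S hS
    rcases lt_or_ge (M.Mx S) i with h | h
    · exact h1 i h
    rcases eq_or_lt_of_le h with h | h
    · rw [h, h2, hZ S]; rfl
    rw [h3 i h]
    have hIH : ∀ S' ∈ M.cond S i, U (i + 1) S' = 0 := fun S' hS' =>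
      IH (i + 1) (by omega) S' hS'.1
    apply le_antisymm
    · refine iInf₂_le_of_le ⟨fun _ _ => 0, fun _ => 0⟩ M.zero_mem ?_
      apply iSup₂_le
      intro S' hS'
      rw [hIH S' hS']
      simp
    · refine le_iInf₂ fun H hH => ?_
      set u := H.pos i S with hu_def
      by_contra hlt
      push_neg at hlt
      obtain ⟨r, hAr, hr0⟩ := EReal.exists_between_coe_real hlt
      have hr0' : r < 0 := by exact_mod_cast hr0
      have key : ∀ S' ∈ M.cond S i, -r < u * (S' (i + 1) - S i) := by
        intro S' hS'
        have hterm : U (i + 1) S' - ((u * (S' (i + 1) - S i) : ℝ) : EReal) <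
            (r : EReal) :=
          lt_of_le_of_lt (le_iSup₂_of_le S' hS' le_rfl) hAr
        rw [hIH S' hS', zero_sub, ← EReal.coe_neg, EReal.coe_lt_coe_iff] at hterm
        linarith
      obtain ⟨hsup, hinf⟩ := hloc S hS i
      rcases lt_trichotomy u 0 with hu | hu | hu
      · -- u < 0 : all increments are < -r/u < 0, contradicting 0 ≤ sup
        have hq : -r / u < 0 := div_neg_of_pos_of_neg (by linarith) hu
        have hle : (⨆ S' ∈ M.cond S i, ((S' (i + 1) - S i : ℝ) : EReal)) ≤
            ((-r / u : ℝ) : EReal) := by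
          refine iSup₂_le fun S' hS' => ?_
          have := key S' hS'
          rw [EReal.coe_le_coe_iff]
          have : S' (i + 1) - S i ≤ -r / u := by
            rw [le_div_iff_of_neg hu]
            nlinarith
          linarith
        have h0 : (0 : EReal) ≤ ((-r / u : ℝ) : EReal) := le_trans hsup hle
        rw [← EReal.coe_zero, EReal.coe_le_coe_iff] at h0
        linarith
      · -- u = 0 : immediate contradiction at S' = S
        have := key S ⟨hS, fun _ _ => rfl⟩
        rw [hu] at this
        simp at this
        linarith
      · -- u > 0 : all increments are > -r/u > 0, contradicting inf ≤ 0
        have hq : 0 < -r / u := div_pos (by linarith) hu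
        have hle : ((-r / u : ℝ) : EReal) ≤
            (⨅ S' ∈ M.cond S i, ((S' (i + 1) - S i : ℝ) : EReal)) := by
          refine le_iInf₂ fun S' hS' => ?_
          have := key S' hS'
          rw [EReal.coe_le_coe_iff]
          rw [div_le_iff₀ hu]
          nlinarith
        have h0 : ((-r / u : ℝ) : EReal) ≤ 0 := le_trans hle hinf
        rw [← EReal.coe_zero, EReal.coe_le_coe_iff] at h0
        linarith

/-- in an `n`-bounded market with a locally 0-neutral trajectory set, the
dynamic bounds of the zero payoff vanish: `U̲₀(s₀, 0, ℳ) = Ū₀(s₀, 0, ℳ) = 0`. -/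
theorem dynamic_bounds_zero_payoff (n : ℕ) (M : Market) (hn : M.NBounded n)
    (hloc : M.LocallyZeroNeutral)
    (U U' : ℕ → (ℕ → ℝ) → EReal)
    (hU : M.IsDynU (fun _ => (0 : ℝ)) U) (hU' : M.IsDynU (fun _ => -(0 : ℝ)) U')
    (S : ℕ → ℝ) (hS : S ∈ M.T) :
    - U' 0 S = 0 ∧ U 0 S = 0 := by
  constructor
  · rw [dynU_zero n M hn hloc _ (fun _ => neg_zero) U' hU' n 0 (by omega) S hS]
    simp
  · exact dynU_zero n M hn hloc _ (fun _ => rfl) U hU n 0 (by omega) S hS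
end

section
/- Let ℳ = 𝒮 × ℋ be an n-bounded discrete market such that N_H is a stopping time for every H ∈ ℋ, and assume that for every S ∈ 𝒮 and 0 ≤ k < M(S), either I^k_S = {H_k(S) : H ∈ ℋ} is a compact subset of ℝ, or 𝒮 satisfies the up-down property at (S, k) and I^k_S = ℝ; assume also that the dynamic bounds Ū_{k+1}(·, Z, ℳ) are finite on the relevant conditional sets. Then there exists a non-anticipative portfolio H* with N_{H*}(S) = M(S) such that, setting ℋ* = ℋ ∪ {H*}, the market ℳ* = 𝒮 × ℋ* is u-complete with respect to Z; moreover Ū_i(S, Z, ℳ*) = Ū_i(S, Z, ℳ) for all S ∈ 𝒮 and 0 ≤ i ≤ n. -/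
open scoped BigOperators

/-! ### Auxiliary material for the u-completion theorem -/

noncomputable section UCompletionAux
open Classical

/-- The local cost function `φ(u) = sup_{S' ∈ C} (U_{k+1}(S') - u ΔS')`. -/
def phiFun (U : ℕ → (ℕ → ℝ) → EReal) (C : Set (ℕ → ℝ)) (k : ℕ) (u : ℝ) : EReal :=
  ⨆ S' ∈ C, (U (k + 1) S' - ((u * (S' (k + 1) - S' k) : ℝ) : EReal))

lemma phiFun_lsc (U : ℕ → (ℕ → ℝ) → EReal) (C : Set (ℕ → ℝ)) (k : ℕ) :
    LowerSemicontinuous (phiFun U C k) := by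
  apply lowerSemicontinuous_biSup
  intro S' _
  generalize U (k + 1) S' = c
  induction c with
  | bot =>
    simp only [EReal.bot_sub]
    exact lowerSemicontinuous_const
  | coe a =>
    have : (fun u : ℝ => (a : EReal) - ((u * (S' (k + 1) - S' k) : ℝ) : EReal))
        = fun u : ℝ => (((a - u * (S' (k + 1) - S' k) : ℝ)) : EReal) := by
      ext u; rw [EReal.coe_sub]
    rw [this]
    exact (continuous_coe_real_ereal.comp (by fun_prop)).lowerSemicontinuous
  | top =>
    simp only [EReal.top_sub_coe]
    exact lowerSemicontinuous_const

lemma exists_min_on_compact {f : ℝ → EReal} (hf : LowerSemicontinuous f)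
    {I : Set ℝ} (hI : IsCompact I) (hne : I.Nonempty) :
    ∃ u ∈ I, ∀ v ∈ I, f u ≤ f v := by
  have h := hI.inter_iInter_nonempty (ι := I) (fun v => f ⁻¹' Set.Iic (f v))
    (fun v => hf.isClosed_preimage _) ?_
  · obtain ⟨u, huI, hu⟩ := h
    refine ⟨u, huI, fun v hv => ?_⟩
    exact Set.mem_iInter.1 hu ⟨v, hv⟩
  · intro t
    rcases t.eq_empty_or_nonempty with rfl | ⟨v0, hv0⟩
    · simpa using hne
    · obtain ⟨w, _, hwmin⟩ := t.exists_min_image (fun v => f ↑v) ⟨v0, hv0⟩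
      refine ⟨(w : ℝ), w.2, ?_⟩
      simp only [Set.mem_iInter, Set.mem_preimage, Set.mem_Iic]
      intro v hv
      exact hwmin v hv

/-- A canonical choice of minimizer of `φ` over `I` (when one exists). -/
def pick (U : ℕ → (ℕ → ℝ) → EReal) (C : Set (ℕ → ℝ)) (I : Set ℝ) (k : ℕ) : ℝ :=
  if h : ∃ u ∈ I, ∀ v ∈ I, phiFun U C k u ≤ phiFun U C k v then h.choose else 0

lemma pick_spec (U : ℕ → (ℕ → ℝ) → EReal) (C : Set (ℕ → ℝ)) (I : Set ℝ) (k : ℕ)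
    (h : ∃ u ∈ I, ∀ v ∈ I, phiFun U C k u ≤ phiFun U C k v) :
    pick U C I k ∈ I ∧ ∀ v ∈ I, phiFun U C k (pick U C I k) ≤ phiFun U C k v := by
  rw [pick, dif_pos h]
  exact ⟨h.choose_spec.1, h.choose_spec.2⟩

/-- The position of the completing portfolio `H*`. -/
def HstarPos (M : Market) (U : ℕ → (ℕ → ℝ) → EReal) (k : ℕ) (S : ℕ → ℝ) : ℝ :=
  if S ∈ M.T ∧ k < M.Mx S then pick U (M.cond S k) (M.Iset k S) k else 0

namespace Market

lemma zero_mem_Iset (M : Market) (k : ℕ) (S : ℕ → ℝ) : (0 : ℝ) ∈ M.Iset k S :=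
  ⟨_, M.zero_mem, rfl⟩

lemma mx_le (M : Market) {n : ℕ} (hn : M.NBounded n) {S : ℕ → ℝ} (hS : S ∈ M.T) :
    M.Mx S ≤ n := by
  refine csSup_le ⟨_, ⟨_, M.zero_mem, rfl⟩⟩ ?_
  rintro m ⟨H, hH, rfl⟩
  exact hn H hH S hS

lemma lt_mx_iff (M : Market) {n : ℕ} (hn : M.NBounded n) {S : ℕ → ℝ} (hS : S ∈ M.T) {i : ℕ} :
    i < M.Mx S ↔ ∃ H ∈ M.P, i < H.N S := by
  constructor
  · intro h
    by_contra hc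
    push_neg at hc
    have : M.Mx S ≤ i := csSup_le ⟨_, ⟨_, M.zero_mem, rfl⟩⟩ (by rintro m ⟨H, hH, rfl⟩; exact hc H hH)
    omega
  · rintro ⟨H, hH, hi⟩
    refine lt_of_lt_of_le hi (le_csSup ⟨n, ?_⟩ ⟨H, hH, rfl⟩)
    rintro m ⟨H', hH', rfl⟩
    exact hn H' hH' S hS

lemma lt_mx_congr (M : Market) {n : ℕ} (hn : M.NBounded n)
    (hstop : ∀ H ∈ M.P, StoppingTime M.T H.N) {S S' : ℕ → ℝ}
    (hS : S ∈ M.T) (hS' : S' ∈ M.T) {i : ℕ} (hag : ∀ l ≤ i, S l = S' l) :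
    (i < M.Mx S ↔ i < M.Mx S') := by
  suffices h : ∀ T1 T2 : ℕ → ℝ, T1 ∈ M.T → T2 ∈ M.T → (∀ l ≤ i, T1 l = T2 l) →
      i < M.Mx T1 → i < M.Mx T2 by
    exact ⟨h S S' hS hS' hag, h S' S hS' hS fun l hl => (hag l hl).symm⟩
  intro T1 T2 h1 h2 hag12 hlt
  rw [M.lt_mx_iff hn h1] at hlt
  obtain ⟨H, hH, hi⟩ := hlt
  rw [M.lt_mx_iff hn h2]
  refine ⟨H, hH, ?_⟩
  by_contra hc
  push_neg at hc
  have := hstop H hH T2 h2 T1 h1 fun l hl => hag12 l (hl.trans hc)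
  omega

lemma cond_congr (M : Market) {S S' : ℕ → ℝ} {i : ℕ} (hag : ∀ l ≤ i, S l = S' l) :
    M.cond S i = M.cond S' i := by
  ext x
  simp only [Market.cond, Set.mem_setOf_eq]
  exact ⟨fun ⟨hx, h⟩ => ⟨hx, fun l hl => (h l hl).trans (hag l hl)⟩,
    fun ⟨hx, h⟩ => ⟨hx, fun l hl => (h l hl).trans (hag l hl).symm⟩⟩

lemma iset_congr (M : Market) {S S' : ℕ → ℝ} (hS : S ∈ M.T) (hS' : S' ∈ M.T) {i : ℕ}
    (hag : ∀ l ≤ i, S l = S' l) : M.Iset i S = M.Iset i S' := by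
  ext u
  constructor <;> rintro ⟨H, hH, rfl⟩
  · exact ⟨H, hH, (M.nonanticipative H hH i S hS S' hS' hag).symm⟩
  · exact ⟨H, hH, M.nonanticipative H hH i S hS S' hS' hag⟩

end Market

lemma HstarPos_nonanticipative (M : Market) {n : ℕ} (hn : M.NBounded n)
    (hstop : ∀ H ∈ M.P, StoppingTime M.T H.N) (U : ℕ → (ℕ → ℝ) → EReal)
    (i : ℕ) {S S' : ℕ → ℝ} (hS : S ∈ M.T) (hS' : S' ∈ M.T) (hag : ∀ l ≤ i, S l = S' l) :
    HstarPos M U i S = HstarPos M U i S' := by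
  have h1 : M.cond S i = M.cond S' i := M.cond_congr hag
  have h2 : M.Iset i S = M.Iset i S' := M.iset_congr hS hS' hag
  have h3 : (S ∈ M.T ∧ i < M.Mx S) ↔ (S' ∈ M.T ∧ i < M.Mx S') := by
    constructor
    · intro ⟨_, h⟩; exact ⟨hS', (M.lt_mx_congr hn hstop hS hS' hag).1 h⟩
    · intro ⟨_, h⟩; exact ⟨hS, (M.lt_mx_congr hn hstop hS hS' hag).2 h⟩
  rw [HstarPos, HstarPos, h1, h2]
  exact if_congr h3 rfl rfl

lemma biSup_phi_eq (M : Market) (U : ℕ → (ℕ → ℝ) → EReal) {S : ℕ → ℝ} {k : ℕ} (p : ℝ) :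
    (⨆ S' ∈ M.cond S k, (U (k + 1) S' - ((p * (S' (k + 1) - S k) : ℝ) : EReal)))
      = phiFun U (M.cond S k) k p := by
  refine biSup_congr fun S' hS' => ?_
  rw [hS'.2 k le_rfl]

lemma U_ne_bot {n : ℕ} {M : Market} (hn : M.NBounded n) {Z : (ℕ → ℝ) → ℝ}
    {U : ℕ → (ℕ → ℝ) → EReal} (hU : M.IsDynU Z U)
    (hcase : ∀ S ∈ M.T, ∀ k : ℕ, k < M.Mx S →
      IsCompact (M.Iset k S) ∨ (M.UpDownNode S k ∧ M.Iset k S = Set.univ))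
    (hfin : ∀ S ∈ M.T, ∀ k : ℕ, k < M.Mx S → ∀ S' ∈ M.cond S k, U (k + 1) S' < ⊤) :
    ∀ S ∈ M.T, ∀ k : ℕ, ⊥ < U k S := by
  suffices h : ∀ d k, n + 1 - k ≤ d → ∀ S ∈ M.T, ⊥ < U k S by
    intro S hS k
    exact h (n + 1) k (by omega) S hS
  intro d
  induction d with
  | zero =>
    intro k hk S hS
    have hk' : M.Mx S < k := lt_of_le_of_lt (M.mx_le hn hS) (by omega)
    rw [(hU S hS).1 k hk', ← EReal.coe_zero]
    exact EReal.bot_lt_coe 0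
  | succ d ih =>
    intro k _ S hS
    rcases lt_trichotomy k (M.Mx S) with hlt | heq | hgt
    · rw [(hU S hS).2.2 k hlt]
      have hreal : ∀ S' ∈ M.cond S k, ∃ c : ℝ, U (k + 1) S' = (c : EReal) := by
        intro S' hS'
        exact ⟨(U (k + 1) S').toReal,
          (EReal.coe_toReal (hfin S hS k hlt S' hS').ne
            (ih (k + 1) (by omega) S' hS'.1).ne').symm⟩
      have key : ∃ b : ℝ, ∀ H ∈ M.P, (b : EReal) ≤
          ⨆ S' ∈ M.cond S k, (U (k + 1) S' - ((H.pos k S * (S' (k + 1) - S k) : ℝ) : EReal)) := by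
        rcases hcase S hS k hlt with hcomp | ⟨⟨hup, hdn⟩, _⟩
        · obtain ⟨R, hR⟩ := hcomp.isBounded.subset_closedBall 0
          have hSm : S ∈ M.cond S k := ⟨hS, fun i _ => rfl⟩
          obtain ⟨c, hc⟩ := hreal S hSm
          refine ⟨c - R * |S (k + 1) - S k|, fun H hH => ?_⟩
          have hp : |H.pos k S| ≤ R := by
            have := hR ⟨H, hH, rfl⟩
            rwa [Metric.mem_closedBall, Real.dist_eq, sub_zero] at this
          refine le_trans ?_ (le_iSup₂ (f := fun S' (_ : S' ∈ M.cond S k) =>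
            U (k + 1) S' - ((H.pos k S * (S' (k + 1) - S k) : ℝ) : EReal)) S hSm)
          rw [hc, ← EReal.coe_sub, EReal.coe_le_coe_iff]
          have h1 : H.pos k S * (S (k + 1) - S k) ≤ |H.pos k S| * |S (k + 1) - S k| := by
            calc H.pos k S * (S (k + 1) - S k) ≤ |H.pos k S * (S (k + 1) - S k)| := le_abs_self _
              _ = |H.pos k S| * |S (k + 1) - S k| := abs_mul _ _
          have h2 := mul_le_mul_of_nonneg_right hp (abs_nonneg (S (k + 1) - S k))
          linarith
        · simp only [lt_iSup_iff] at hup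
          obtain ⟨Sp, hSp, hdp⟩ := hup
          rw [← EReal.coe_zero, EReal.coe_lt_coe_iff] at hdp
          simp only [iInf_lt_iff] at hdn
          obtain ⟨Sm, hSm, hdm⟩ := hdn
          rw [← EReal.coe_zero, EReal.coe_lt_coe_iff] at hdm
          obtain ⟨cp, hcp⟩ := hreal Sp hSp
          obtain ⟨cm, hcm⟩ := hreal Sm hSm
          refine ⟨min cp cm, fun H hH => ?_⟩
          rcases le_total (H.pos k S) 0 with hp | hp
          · refine le_trans ?_ (le_iSup₂ (f := fun S' (_ : S' ∈ M.cond S k) =>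
              U (k + 1) S' - ((H.pos k S * (S' (k + 1) - S k) : ℝ) : EReal)) Sp hSp)
            rw [hcp, ← EReal.coe_sub, EReal.coe_le_coe_iff]
            have hpd : H.pos k S * (Sp (k + 1) - S k) ≤ 0 := by nlinarith
            have := min_le_left cp cm
            linarith
          · refine le_trans ?_ (le_iSup₂ (f := fun S' (_ : S' ∈ M.cond S k) =>
              U (k + 1) S' - ((H.pos k S * (S' (k + 1) - S k) : ℝ) : EReal)) Sm hSm)
            rw [hcm, ← EReal.coe_sub, EReal.coe_le_coe_iff]
            have hpd : H.pos k S * (Sm (k + 1) - S k) ≤ 0 := by nlinarith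
            have := min_le_right cp cm
            linarith
      obtain ⟨b, hb⟩ := key
      exact lt_of_lt_of_le (EReal.bot_lt_coe b) (le_iInf₂ hb)
    · rw [heq, (hU S hS).2.1]
      exact EReal.bot_lt_coe _
    · rw [(hU S hS).1 k hgt, ← EReal.coe_zero]
      exact EReal.bot_lt_coe 0

lemma exists_phi_min {n : ℕ} {M : Market} (hn : M.NBounded n) {Z : (ℕ → ℝ) → ℝ}
    {U : ℕ → (ℕ → ℝ) → EReal} (hU : M.IsDynU Z U)
    (hcase : ∀ S ∈ M.T, ∀ k : ℕ, k < M.Mx S →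
      IsCompact (M.Iset k S) ∨ (M.UpDownNode S k ∧ M.Iset k S = Set.univ))
    (hfin : ∀ S ∈ M.T, ∀ k : ℕ, k < M.Mx S → ∀ S' ∈ M.cond S k, U (k + 1) S' < ⊤) :
    ∀ S ∈ M.T, ∀ k : ℕ, k < M.Mx S →
      ∃ u ∈ M.Iset k S, ∀ v ∈ M.Iset k S,
        phiFun U (M.cond S k) k u ≤ phiFun U (M.cond S k) k v := by
  have hbot := U_ne_bot hn hU hcase hfin
  intro S hS k hlt
  rcases hcase S hS k hlt with hcomp | ⟨⟨hup, hdn⟩, hIuniv⟩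
  · exact exists_min_on_compact (phiFun_lsc U _ k) hcomp ⟨0, M.zero_mem_Iset k S⟩
  · rw [hIuniv]
    by_cases hT : ∃ u0, phiFun U (M.cond S k) k u0 < ⊤
    case neg =>
      push_neg at hT
      exact ⟨0, Set.mem_univ 0, fun v _ => le_trans le_top (hT v)⟩
    case pos =>
      obtain ⟨u0, hu0⟩ := hT
      simp only [lt_iSup_iff] at hup
      obtain ⟨Sp, hSp, hdp⟩ := hup
      rw [← EReal.coe_zero, EReal.coe_lt_coe_iff] at hdp
      simp only [iInf_lt_iff] at hdn
      obtain ⟨Sm, hSm, hdm⟩ := hdn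
      rw [← EReal.coe_zero, EReal.coe_lt_coe_iff] at hdm
      obtain ⟨cp, hcp⟩ : ∃ c : ℝ, U (k + 1) Sp = (c : EReal) :=
        ⟨(U (k + 1) Sp).toReal, (EReal.coe_toReal (hfin S hS k hlt Sp hSp).ne
          (hbot Sp hSp.1 (k + 1)).ne').symm⟩
      obtain ⟨cm, hcm⟩ : ∃ c : ℝ, U (k + 1) Sm = (c : EReal) :=
        ⟨(U (k + 1) Sm).toReal, (EReal.coe_toReal (hfin S hS k hlt Sm hSm).ne
          (hbot Sm hSm.1 (k + 1)).ne').symm⟩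
      have hlinep : ∀ v : ℝ, ((cp - v * (Sp (k + 1) - S k) : ℝ) : EReal)
          ≤ phiFun U (M.cond S k) k v := by
        intro v
        refine le_trans (le_of_eq ?_) (le_iSup₂ (f := fun S' (_ : S' ∈ M.cond S k) =>
          U (k + 1) S' - ((v * (S' (k + 1) - S' k) : ℝ) : EReal)) Sp hSp)
        rw [hSp.2 k le_rfl, hcp, EReal.coe_sub]
      have hlinem : ∀ v : ℝ, ((cm - v * (Sm (k + 1) - S k) : ℝ) : EReal)
          ≤ phiFun U (M.cond S k) k v := by
        intro v
        refine le_trans (le_of_eq ?_) (le_iSup₂ (f := fun S' (_ : S' ∈ M.cond S k) =>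
          U (k + 1) S' - ((v * (S' (k + 1) - S' k) : ℝ) : EReal)) Sm hSm)
        rw [hSm.2 k le_rfl, hcm, EReal.coe_sub]
      have hne_bot : phiFun U (M.cond S k) k u0 ≠ ⊥ := by
        intro h
        have := hlinep u0
        rw [h, le_bot_iff] at this
        exact EReal.coe_ne_bot _ this
      obtain ⟨r, hr⟩ : ∃ r : ℝ, phiFun U (M.cond S k) k u0 = (r : EReal) :=
        ⟨_, (EReal.coe_toReal hu0.ne hne_bot).symm⟩
      set dp := Sp (k + 1) - S k with hdpdef
      set dm := Sm (k + 1) - S k with hdmdef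
      set R := max |u0| (max ((r - cp) / dp) ((r - cm) / (-dm))) with hRdef
      have hu0mem : u0 ∈ Set.Icc (-R) R := by
        have := le_max_left |u0| (max ((r - cp) / dp) ((r - cm) / (-dm)))
        have h1 := abs_le.1 (this)
        exact Set.mem_Icc.2 ⟨by linarith [h1.1], h1.2⟩
      obtain ⟨u, huI, humin⟩ := exists_min_on_compact (phiFun_lsc U (M.cond S k) k)
        isCompact_Icc ⟨u0, hu0mem⟩
      refine ⟨u, Set.mem_univ u, fun v _ => ?_⟩
      by_cases hv : v ∈ Set.Icc (-R) R
      · exact humin v hv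
      · have hv' : v < -R ∨ R < v := by
          rcases le_or_gt (-R) v with h | h
          · right
            by_contra hc
            exact hv (Set.mem_Icc.2 ⟨h, not_lt.1 hc⟩)
          · left; exact h
        have hkey : (r : EReal) ≤ phiFun U (M.cond S k) k v := by
          rcases hv' with h | h
          · refine le_trans ?_ (hlinep v)
            rw [EReal.coe_le_coe_iff]
            have h1 : (r - cp) / dp ≤ R :=
              le_trans (le_max_left _ _) (le_max_right _ _)
            have h3 : (r - cp) / dp ≤ -v := by linarith
            have h2 : r - cp ≤ (-v) * dp := by
              calc r - cp = ((r - cp) / dp) * dp := (div_mul_cancel₀ _ hdp.ne').symm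
                _ ≤ (-v) * dp := mul_le_mul_of_nonneg_right h3 hdp.le
            linarith
          · refine le_trans ?_ (hlinem v)
            rw [EReal.coe_le_coe_iff]
            have h1 : (r - cm) / (-dm) ≤ R :=
              le_trans (le_max_right _ _) (le_max_right _ _)
            have h3 : (r - cm) / (-dm) ≤ v := by linarith
            have h2 : r - cm ≤ v * (-dm) := by
              calc r - cm = ((r - cm) / (-dm)) * (-dm) :=
                  (div_mul_cancel₀ _ (by linarith : (0:ℝ) < -dm).ne').symm
                _ ≤ v * (-dm) := mul_le_mul_of_nonneg_right h3 (by linarith)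
            linarith
        calc phiFun U (M.cond S k) k u ≤ phiFun U (M.cond S k) k u0 := humin u0 hu0mem
          _ = (r : EReal) := hr
          _ ≤ phiFun U (M.cond S k) k v := hkey

end UCompletionAux

/-- u-completion of a market. Under the stated hypotheses there is a
non-anticipative portfolio `H*` with `N_{H*} = M` such that the enlarged market
`ℳ* = 𝒮 × (ℋ ∪ {H*})` is u-complete with respect to `Z` and has the same dynamic
bounds as `ℳ`. -/
theorem u_completion_theorem (n : ℕ) (M : Market) (hn : M.NBounded n)
    (hstop : ∀ H ∈ M.P, StoppingTime M.T H.N)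
    (Z : (ℕ → ℝ) → ℝ) (U : ℕ → (ℕ → ℝ) → EReal) (hU : M.IsDynU Z U)
    (hcase : ∀ S ∈ M.T, ∀ k : ℕ, k < M.Mx S →
      IsCompact (M.Iset k S) ∨ (M.UpDownNode S k ∧ M.Iset k S = Set.univ))
    (hfin : ∀ S ∈ M.T, ∀ k : ℕ, k < M.Mx S → ∀ S' ∈ M.cond S k, U (k + 1) S' < ⊤) :
    ∃ Hstar : Portfolio,
      (∀ i : ℕ, ∀ S ∈ M.T, ∀ S' ∈ M.T, (∀ l ≤ i, S l = S' l) →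
        Hstar.pos i S = Hstar.pos i S') ∧
      (∀ S ∈ M.T, Hstar.N S = M.Mx S) ∧
      ∃ Mstar : Market, Mstar.s0 = M.s0 ∧ Mstar.T = M.T ∧ Mstar.P = insert Hstar M.P ∧
        ∀ Ustar : ℕ → (ℕ → ℝ) → EReal, Mstar.IsDynU Z Ustar →
          (∀ S ∈ M.T, ∀ i : ℕ, i ≤ n → Ustar i S = U i S) ∧ Mstar.UComplete Z Ustar := by
    classical
  have hbot := U_ne_bot hn hU hcase hfin
  have hmin := exists_phi_min hn hU hcase hfin
  set Hstar : Portfolio := ⟨HstarPos M U, M.Mx⟩ with hHstar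
  have hna : ∀ i : ℕ, ∀ S ∈ M.T, ∀ S' ∈ M.T, (∀ l ≤ i, S l = S' l) →
      Hstar.pos i S = Hstar.pos i S' := fun i S hS S' hS' hag =>
    HstarPos_nonanticipative M hn hstop U i hS hS' hag
  have hposval : ∀ S ∈ M.T, ∀ k, k < M.Mx S →
      Hstar.pos k S = pick U (M.cond S k) (M.Iset k S) k := by
    intro S hS k hlt
    show HstarPos M U k S = _
    rw [HstarPos, if_pos ⟨hS, hlt⟩]
  have hposzero : ∀ S ∈ M.T, ∀ k, M.Mx S ≤ k → Hstar.pos k S = 0 := by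
    intro S hS k hge
    show HstarPos M U k S = 0
    rw [HstarPos, if_neg (by rintro ⟨-, h⟩; omega)]
  refine ⟨Hstar, hna, fun S _ => rfl, ?_⟩
  have hnonant : ∀ H ∈ insert Hstar M.P, ∀ i : ℕ, ∀ S ∈ M.T, ∀ S' ∈ M.T,
      (∀ l ≤ i, S l = S' l) → H.pos i S = H.pos i S' := by
    rintro H hH i S hS S' hS' hag
    rcases Set.mem_insert_iff.1 hH with rfl | hH
    · exact hna i S hS S' hS' hag
    · exact M.nonanticipative H hH i S hS S' hS' hag
  have hliq : ∀ H ∈ insert Hstar M.P, ∀ S ∈ M.T, ∀ k : ℕ, H.N S ≤ k → H.pos k S = 0 := by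
    rintro H hH S hS k hk
    rcases Set.mem_insert_iff.1 hH with rfl | hH
    · exact hposzero S hS k hk
    · exact M.liquidate H hH S hS k hk
  set Mstar : Market :=
    { s0 := M.s0
      T := M.T
      P := insert Hstar M.P
      start := M.start
      nonanticipative := hnonant
      liquidate := hliq
      zero_mem := Set.mem_insert_of_mem _ M.zero_mem } with hMstar
  refine ⟨Mstar, rfl, rfl, rfl, ?_⟩
  intro Ustar hUstar
  have hMxeq : ∀ S ∈ M.T, Mstar.Mx S = M.Mx S := by
    intro S hS
    have hbdd : BddAbove ((fun H : Portfolio => H.N S) '' M.P) :=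
      ⟨n, by rintro m ⟨H, hH, rfl⟩; exact hn H hH S hS⟩
    have hne : ((fun H : Portfolio => H.N S) '' M.P).Nonempty :=
      ⟨_, ⟨_, M.zero_mem, rfl⟩⟩
    show sSup ((fun H : Portfolio => H.N S) '' insert Hstar M.P) = M.Mx S
    rw [Set.image_insert_eq, csSup_insert hbdd hne]
    show M.Mx S ⊔ M.Mx S = M.Mx S
    exact sup_idem _
  have hcondeq : ∀ (S : ℕ → ℝ) (k : ℕ), Mstar.cond S k = M.cond S k := fun _ _ => rfl
  have key : ∀ d k, n + 1 - k ≤ d → ∀ S ∈ M.T, Ustar k S = U k S := by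
    intro d
    induction d with
    | zero =>
      intro k hk S hS
      have h1 : M.Mx S < k := lt_of_le_of_lt (M.mx_le hn hS) (by omega)
      have h2 : Mstar.Mx S < k := by rw [hMxeq S hS]; exact h1
      rw [(hUstar S hS).1 k h2, (hU S hS).1 k h1]
    | succ d ih =>
      intro k _ S hS
      rcases lt_trichotomy k (M.Mx S) with hlt | heq | hgt
      · have e1 := (hU S hS).2.2 k hlt
        have e2 := (hUstar S hS).2.2 k (by rw [hMxeq S hS]; exact hlt)
        have hbody : ∀ H : Portfolio,
            (⨆ S' ∈ Mstar.cond S k,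
              (Ustar (k + 1) S' - ((H.pos k S * (S' (k + 1) - S k) : ℝ) : EReal)))
              = ⨆ S' ∈ M.cond S k,
                (U (k + 1) S' - ((H.pos k S * (S' (k + 1) - S k) : ℝ) : EReal)) := by
          intro H
          rw [hcondeq]
          exact biSup_congr fun S' hS' => by rw [ih (k + 1) (by omega) S' hS'.1]
        simp only [hbody] at e2
        have e2' : Ustar k S = (⨆ S' ∈ M.cond S k,
            (U (k + 1) S' - ((Hstar.pos k S * (S' (k + 1) - S k) : ℝ) : EReal))) ⊓
            ⨅ H ∈ M.P, ⨆ S' ∈ M.cond S k,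
              (U (k + 1) S' - ((H.pos k S * (S' (k + 1) - S k) : ℝ) : EReal)) := by
          rw [e2]
          exact iInf_insert
        obtain ⟨H0, hH0, hH0e⟩ := (pick_spec U (M.cond S k) (M.Iset k S) k (hmin S hS k hlt)).1
        have hle : U k S ≤ ⨆ S' ∈ M.cond S k,
            (U (k + 1) S' - ((Hstar.pos k S * (S' (k + 1) - S k) : ℝ) : EReal)) := by
          rw [e1]
          refine le_trans (iInf₂_le H0 hH0) (le_of_eq ?_)
          rw [hposval S hS k hlt, ← hH0e]
        rw [e2', ← e1]
        exact inf_eq_right.mpr hle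
      · have h2 := (hUstar S hS).2.1
        rw [hMxeq S hS] at h2
        rw [heq, h2, (hU S hS).2.1]
      · rw [(hUstar S hS).1 k (by rw [hMxeq S hS]; exact hgt), (hU S hS).1 k hgt]
  constructor
  · exact fun S hS i _ => key (n + 1) i (by omega) S hS
  · intro S hS k _ hk2
    rw [hMxeq S hS] at hk2
    refine ⟨Hstar, Set.mem_insert _ _, ?_⟩
    have hkS := key (n + 1) k (by omega) S hS
    have hbody : (⨆ S' ∈ Mstar.cond S k,
        (Ustar (k + 1) S' - ((Hstar.pos k S * (S' (k + 1) - S k) : ℝ) : EReal)))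
        = ⨆ S' ∈ M.cond S k,
          (U (k + 1) S' - ((Hstar.pos k S * (S' (k + 1) - S k) : ℝ) : EReal)) := by
      rw [hcondeq]
      exact biSup_congr fun S' hS' => by rw [key (n + 1) (k + 1) (by omega) S' hS'.1]
    rw [hkS, hbody]
    have hspec := pick_spec U (M.cond S k) (M.Iset k S) k (hmin S hS k hk2)
    obtain ⟨H0, hH0, hH0e⟩ := hspec.1
    refine le_antisymm ?_ ?_
    · rw [(hU S hS).2.2 k hk2]
      refine le_trans (iInf₂_le H0 hH0) (le_of_eq ?_)
      rw [hposval S hS k hk2, ← hH0e]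
    · rw [(hU S hS).2.2 k hk2]
      refine le_iInf₂ fun H hH => ?_
      rw [biSup_phi_eq M U, biSup_phi_eq M U, hposval S hS k hk2]
      exact hspec.2 (H.pos k S) ⟨H, hH, rfl⟩
end

section
/- Let ℳ = 𝒮 × ℋ be an n-bounded discrete market, Z a function on 𝒮, and (S, i) a node with 0 ≤ i < M(S) at which both 𝒮⁻_(S,i) and 𝒮⁺_(S,i) are nonempty. Then the convex-hull quantity satisfies L_i(S, Z, ℳ) ≤ Ū_i(S, Z, ℳ). -/
open scoped BigOperators

private lemma convex_chord_aux (Up Um a b s u : ℝ) (hb : b ≤ s) (ha : s < a) :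
    Up - (Up - Um) / (a - b) * (a - s) ≤ max (Up - u * (a - s)) (Um - u * (b - s)) := by
  have hab : (0:ℝ) < a - b := by linarith
  set l : ℝ := (s - b) / (a - b) with hl
  have hl0 : 0 ≤ l := div_nonneg (by linarith) hab.le
  have hl1 : l ≤ 1 := by rw [hl, div_le_one hab]; linarith
  have key : Up - (Up - Um) / (a - b) * (a - s)
      = l * (Up - u * (a - s)) + (1 - l) * (Um - u * (b - s)) := by
    rw [hl]; field_simp; ring
  have hx := mul_le_mul_of_nonneg_left
    (le_max_left (Up - u * (a - s)) (Um - u * (b - s))) hl0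
  have hy := mul_le_mul_of_nonneg_left
    (le_max_right (Up - u * (a - s)) (Um - u * (b - s))) (by linarith : (0:ℝ) ≤ 1 - l)
  linarith

/-- the convex-hull quantity is dominated by the dynamic bound:
`L_i(S, Z, ℳ) ≤ Ū_i(S, Z, ℳ)`. -/
theorem convex_hull_le (n : ℕ) (M : Market) (hn : M.NBounded n)
    (Z : (ℕ → ℝ) → ℝ) (U : ℕ → (ℕ → ℝ) → ℝ) (hU : M.IsDynUR Z U)
    (S : ℕ → ℝ) (hS : S ∈ M.T) (i : ℕ) (hi : i < M.Mx S)
    (hminus : (M.Sminus S i).Nonempty) (hplus : (M.Splus S i).Nonempty) :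
    M.Lval U S i ≤ ((U i S : ℝ) : EReal) := by
  obtain ⟨h0, hfin, hrec⟩ := hU S hS
  rw [Market.Lval]
  refine iSup₂_le fun Sp hSp => iSup₂_le fun Sm hSm => ?_
  rw [hrec i hi]
  refine le_iInf₂ fun u hu => ?_
  have hsp : ((U (i + 1) Sp - u * (Sp (i + 1) - S i) : ℝ) : EReal)
      ≤ ⨆ S' ∈ M.cond S i, ((U (i + 1) S' - u * (S' (i + 1) - S i) : ℝ) : EReal) :=
    le_iSup₂ (f := fun S' (_ : S' ∈ M.cond S i) =>
      ((U (i + 1) S' - u * (S' (i + 1) - S i) : ℝ) : EReal)) Sp hSp.1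
  have hsm : ((U (i + 1) Sm - u * (Sm (i + 1) - S i) : ℝ) : EReal)
      ≤ ⨆ S' ∈ M.cond S i, ((U (i + 1) S' - u * (S' (i + 1) - S i) : ℝ) : EReal) :=
    le_iSup₂ (f := fun S' (_ : S' ∈ M.cond S i) =>
      ((U (i + 1) S' - u * (S' (i + 1) - S i) : ℝ) : EReal)) Sm hSm.1
  have haux := convex_chord_aux (U (i + 1) Sp) (U (i + 1) Sm) (Sp (i + 1)) (Sm (i + 1))
    (S i) u hSm.2 hSp.2
  rcases le_total (U (i + 1) Sp - u * (Sp (i + 1) - S i))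
      (U (i + 1) Sm - u * (Sm (i + 1) - S i)) with h | h
  · refine le_trans (EReal.coe_le_coe_iff.2 ?_) hsm
    rw [max_eq_right h] at haux
    simpa [chSlope] using haux
  · refine le_trans (EReal.coe_le_coe_iff.2 ?_) hsp
    rw [max_eq_left h] at haux
    simpa [chSlope] using haux
end

section
/- Let ℳ = 𝒮 × ℋ be a discrete market, Z an upper minmax function with data (ν_i)_{i=1}^m, (a_i)_{i=1}^m, b, and suppose the portfolio 0^(A) (the portfolio whose i-th coordinate is A_i(S) for 0 ≤ i < ν_m(S) and 0 for i ≥ ν_m(S)) belongs to ℋ. Then for any fixed S* ∈ 𝒮 and integer k ≥ 0, V̄_k(S*, Z, ℳ) ≤ A₀ s₀ + B, where B = Σ_{l=0}^{k−1} A_l(S*) Δ_l S* + b. -/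
open scoped BigOperators

/-- Auxiliary summation identity: the cumulative gains of the portfolio `A` up to time `n`
telescope to `∑ j, a j * (S (min (ν j S) n) - S 0)`. -/
lemma sum_range_A_aux (m : ℕ) (ν : Fin (m + 1) → (ℕ → ℝ) → ℕ) (a : Fin (m + 1) → ℝ)
    (A : ℕ → (ℕ → ℝ) → ℝ)
    (hA : ∀ (l : ℕ) (S : ℕ → ℝ),
      A l S = ∑ j ∈ Finset.univ.filter (fun j : Fin (m + 1) => l < ν j S), a j)
    (S : ℕ → ℝ) (n : ℕ) :
    ∑ i ∈ Finset.range n, A i S * (S (i + 1) - S i)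
      = ∑ j, a j * (S (min (ν j S) n) - S 0) := by
  calc ∑ i ∈ Finset.range n, A i S * (S (i + 1) - S i)
      = ∑ i ∈ Finset.range n, ∑ j,
          (if i < ν j S then a j * (S (i + 1) - S i) else 0) := by
        refine Finset.sum_congr rfl fun i _ => ?_
        rw [hA, Finset.sum_mul, Finset.sum_filter]
    _ = ∑ j, ∑ i ∈ Finset.range n,
          (if i < ν j S then a j * (S (i + 1) - S i) else 0) := Finset.sum_comm
    _ = ∑ j, a j * (S (min (ν j S) n) - S 0) := by
        refine Finset.sum_congr rfl fun j _ => ?_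
        rw [← Finset.sum_filter]
        have hfil : (Finset.range n).filter (fun i => i < ν j S)
            = Finset.range (min (ν j S) n) := by
          ext i
          simp only [Finset.mem_filter, Finset.mem_range, lt_min_iff]
          tauto
        rw [hfil, ← Finset.mul_sum, Finset.sum_range_sub (fun i => S i)]

/-- if `Z` is an upper minmax function with data `(ν_j)`, `(a_j)`, `b`, and the
portfolio `0^(A)` belongs to `ℋ`, then `V̄_k(S*, Z, ℳ) ≤ A₀ s₀ + B`. -/
theorem upper_minmax_bound (M : Market) (m : ℕ)
    (ν : Fin (m + 1) → (ℕ → ℝ) → ℕ) (a : Fin (m + 1) → ℝ) (b : ℝ)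
    (hstop : ∀ j, StoppingTime M.T (ν j))
    (hmono : ∀ S ∈ M.T, StrictMono (fun j => ν j S))
    (Z : (ℕ → ℝ) → ℝ)
    (hZ : ∀ S ∈ M.T, Z S ≤ ∑ j, a j * S (ν j S) + b)
    (A : ℕ → (ℕ → ℝ) → ℝ)
    (hA : ∀ (l : ℕ) (S : ℕ → ℝ),
      A l S = ∑ j ∈ Finset.univ.filter (fun j : Fin (m + 1) => l < ν j S), a j)
    (hH0 : ∃ H0 ∈ M.P, (∀ i : ℕ, ∀ S ∈ M.T, H0.pos i S = A i S) ∧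
      ∀ S ∈ M.T, H0.N S = ν (Fin.last m) S)
    (Sstar : ℕ → ℝ) (hSstar : Sstar ∈ M.T) (k : ℕ) :
    M.Vbar k Sstar Z ≤
      (((∑ j, a j) * M.s0 +
        (∑ l ∈ Finset.range k, A l Sstar * (Sstar (l + 1) - Sstar l) + b) : ℝ) : EReal) := by
  obtain ⟨H0, hH0P, hpos, hN⟩ := hH0
  refine le_trans (iInf₂_le H0 hH0P) (iSup₂_le fun S' hS' => ?_)
  obtain ⟨hS'T, hagree⟩ := hS'
  rw [EReal.coe_le_coe_iff]
  have hNeq : H0.N S' = ν (Fin.last m) S' := hN S' hS'T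
  have hle : ∀ j, ν j S' ≤ ν (Fin.last m) S' :=
    fun j => (hmono S' hS'T).monotone (Fin.le_last j)
  have hsum : ∑ i ∈ Finset.Ico k (H0.N S'), H0.pos i S' * (S' (i + 1) - S' i)
      = ∑ i ∈ Finset.Ico k (H0.N S'), A i S' * (S' (i + 1) - S' i) :=
    Finset.sum_congr rfl fun i _ => by rw [hpos i S' hS'T]
  set C := ∑ j, a j * (S' (ν j S') - S' 0) with hC
  have hrange : ∀ t, ν (Fin.last m) S' ≤ t →
      ∑ i ∈ Finset.range t, A i S' * (S' (i + 1) - S' i) = C := by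
    intro t ht
    rw [sum_range_A_aux m ν a A hA S' t]
    exact Finset.sum_congr rfl fun j _ => by rw [min_eq_left ((hle j).trans ht)]
  have hIco : ∑ i ∈ Finset.Ico k (H0.N S'), A i S' * (S' (i + 1) - S' i)
      = C - ∑ l ∈ Finset.range k, A l S' * (S' (l + 1) - S' l) := by
    rcases le_or_gt k (H0.N S') with hkN | hNk
    · rw [Finset.sum_Ico_eq_sub _ hkN, hrange (H0.N S') hNeq.ge]
    · have hk' : ν (Fin.last m) S' ≤ k := by omega
      rw [Finset.Ico_eq_empty_of_le hNk.le, Finset.sum_empty, hrange k hk']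
      ring
  have hs0 : S' 0 = M.s0 := M.start S' hS'T
  have hC' : C = ∑ j, a j * S' (ν j S') - (∑ j, a j) * M.s0 := by
    rw [hC, Finset.sum_mul, ← Finset.sum_sub_distrib]
    exact Finset.sum_congr rfl fun j _ => by rw [hs0]; ring
  have hBeq : ∑ l ∈ Finset.range k, A l S' * (S' (l + 1) - S' l)
      = ∑ l ∈ Finset.range k, A l Sstar * (Sstar (l + 1) - Sstar l) := by
    refine Finset.sum_congr rfl fun l hl => ?_
    have hlk := Finset.mem_range.mp hl
    have hAl : A l S' = A l Sstar := by
      rw [hA, hA]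
      refine Finset.sum_congr (Finset.filter_congr fun j _ => ?_) fun _ _ => rfl
      have hcase : ν j S' = ν j Sstar ∨ (k < ν j S' ∧ k < ν j Sstar) := by
        rcases le_or_gt (ν j Sstar) k with h1 | h1
        · exact Or.inl
            (hstop j Sstar hSstar S' hS'T (fun i hi => hagree i (hi.trans h1)))
        · rcases le_or_gt (ν j S') k with h2 | h2
          · have := hstop j S' hS'T Sstar hSstar
              (fun i hi => (hagree i (hi.trans h2)).symm)
            omega
          · exact Or.inr ⟨h2, h1⟩
      constructor <;> intro h <;> omega
    rw [hAl, hagree (l + 1) hlk, hagree l hlk.le]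
  have hZb := hZ S' hS'T
  rw [hsum, hIco]
  linarith [hBeq, hC', hZb]
end

section
/- Let ℳ = 𝒮 × ℋ be an n-bounded discrete market such that 𝒮 is locally 0-neutral, and let Z be a lower minmax function with data (ν_i)_{i=1}^m, (a_i)_{i=1}^m, b, where ν_m is bounded on 𝒮. Then for any fixed S* ∈ 𝒮 and integer k ≥ 0, V̄_k(S*, Z, ℳ) ≥ A₀ s₀ + B, where B = Σ_{l=0}^{k−1} A_l(S*) Δ_l S* + b. -/
open scoped BigOperators

private lemma aux_ereal (x : ℝ) (e : EReal)
    (h : ∀ ε : ℝ, 0 < ε → ((x - ε : ℝ) : EReal) ≤ e) : ((x : ℝ) : EReal) ≤ e := by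
  by_contra hc
  push_neg at hc
  have hne : e ≠ ⊥ := by
    intro hbot
    have h1 := h 1 one_pos
    rw [hbot, le_bot_iff] at h1
    exact EReal.coe_ne_bot _ h1
  have hnt : e ≠ ⊤ := ne_top_of_lt hc
  lift e to ℝ using ⟨hnt, hne⟩
  rw [EReal.coe_lt_coe_iff] at hc
  have h2 := h ((x - e) / 2) (by linarith)
  rw [EReal.coe_le_coe_iff] at h2
  linarith

private lemma pick_step (M : Market) (hloc : M.LocallyZeroNeutral) {S : ℕ → ℝ}
    (hS : S ∈ M.T) (j : ℕ) (c δ : ℝ) (hδ : 0 < δ) :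
    ∃ S', S' ∈ M.cond S j ∧ -δ ≤ c * (S' (j + 1) - S j) := by
  obtain ⟨h1, h2⟩ := hloc S hS j
  rcases lt_trichotomy c 0 with hc | hc | hc
  · by_contra hcon
    push_neg at hcon
    have hkey : ((δ / (-c) : ℝ) : EReal) ≤ ⨅ S' ∈ M.cond S j, ((S' (j + 1) - S j : ℝ) : EReal) := by
      refine le_iInf₂ fun S' hS' => ?_
      rw [EReal.coe_le_coe_iff]
      have h3 := hcon S' hS'
      rw [div_le_iff₀ (neg_pos.mpr hc)]
      nlinarith
    have h4 := le_trans hkey h2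
    rw [← EReal.coe_zero, EReal.coe_le_coe_iff] at h4
    have h5 : 0 < δ / (-c) := div_pos hδ (neg_pos.mpr hc)
    linarith
  · subst hc
    exact ⟨S, ⟨hS, fun _ _ => rfl⟩, by rw [zero_mul]; linarith⟩
  · by_contra hcon
    push_neg at hcon
    have hkey : (⨆ S' ∈ M.cond S j, ((S' (j + 1) - S j : ℝ) : EReal)) ≤ ((-(δ / c) : ℝ) : EReal) := by
      refine iSup₂_le fun S' hS' => ?_
      rw [EReal.coe_le_coe_iff]
      have h3 := hcon S' hS'
      rw [show -(δ / c) = (-δ) / c by ring, le_div_iff₀ hc]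
      nlinarith
    have h4 := le_trans h1 hkey
    rw [← EReal.coe_zero, EReal.coe_le_coe_iff] at h4
    have h5 : 0 < δ / c := div_pos hδ hc
    linarith


/-- in an `n`-bounded market with a locally 0-neutral trajectory set, if `Z`
is a lower minmax function with data `(ν_j)`, `(a_j)`, `b` and `ν_m` is bounded on `𝒮`,
then `V̄_k(S*, Z, ℳ) ≥ A₀ s₀ + B`. -/
theorem lower_minmax_bound (n : ℕ) (M : Market) (hn : M.NBounded n)
    (hloc : M.LocallyZeroNeutral) (m : ℕ)
    (ν : Fin (m + 1) → (ℕ → ℝ) → ℕ) (a : Fin (m + 1) → ℝ) (b : ℝ)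
    (hstop : ∀ j, StoppingTime M.T (ν j))
    (hmono : ∀ S ∈ M.T, StrictMono (fun j => ν j S))
    (hνbdd : ∃ C : ℕ, ∀ S ∈ M.T, ν (Fin.last m) S ≤ C)
    (Z : (ℕ → ℝ) → ℝ)
    (hZ : ∀ S ∈ M.T, ∑ j, a j * S (ν j S) + b ≤ Z S)
    (A : ℕ → (ℕ → ℝ) → ℝ)
    (hA : ∀ (l : ℕ) (S : ℕ → ℝ),
      A l S = ∑ j ∈ Finset.univ.filter (fun j : Fin (m + 1) => l < ν j S), a j)
    (Sstar : ℕ → ℝ) (hSstar : Sstar ∈ M.T) (k : ℕ) :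
    (((∑ j, a j) * M.s0 +
      (∑ l ∈ Finset.range k, A l Sstar * (Sstar (l + 1) - Sstar l) + b) : ℝ) : EReal) ≤
    M.Vbar k Sstar Z := by
  classical
  obtain ⟨C, hC⟩ := hνbdd
  set T : ℕ := max (max n C) k with hTdef
  have hkT : k ≤ T := le_max_right _ _
  have hnT : n ≤ T := le_trans (le_max_left _ _) (le_max_left _ _)
  have hCT : C ≤ T := le_trans (le_max_right _ _) (le_max_left _ _)
  have hνT : ∀ S ∈ M.T, ∀ j, ν j S ≤ T := by
    intro S hS j
    have h1 : ν j S ≤ ν (Fin.last m) S := (hmono S hS).monotone (Fin.le_last j)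
    exact le_trans (le_trans h1 (hC S hS)) hCT
  have hνcong : ∀ l : ℕ, ∀ S ∈ M.T, ∀ S' ∈ M.T, (∀ i ≤ l, S' i = S i) →
      ∀ j, (l < ν j S ↔ l < ν j S') := by
    intro l S hS S' hS' hag j
    constructor
    · intro h1
      by_contra h2
      push_neg at h2
      have h3 : ν j S = ν j S' :=
        hstop j S' hS' S hS fun i hi => (hag i (le_trans hi h2)).symm
      omega
    · intro h1
      by_contra h2
      push_neg at h2
      have h3 : ν j S' = ν j S :=
        hstop j S hS S' hS' fun i hi => hag i (le_trans hi h2)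
      omega
  have hAcong : ∀ l : ℕ, ∀ S ∈ M.T, ∀ S' ∈ M.T, (∀ i ≤ l, S' i = S i) →
      A l S = A l S' := by
    intro l S hS S' hS' hag
    rw [hA, hA]
    refine Finset.sum_congr ?_ fun _ _ => rfl
    ext j
    simp only [Finset.mem_filter, Finset.mem_univ, true_and]
    exact hνcong l S hS S' hS' hag j
  have habel : ∀ S ∈ M.T, ∑ j, a j * S (ν j S)
      = (∑ j, a j) * M.s0 + ∑ l ∈ Finset.range T, A l S * (S (l + 1) - S l) := by
    intro S hS
    have htel : ∀ j, S (ν j S) = M.s0 + ∑ l ∈ Finset.range (ν j S), (S (l + 1) - S l) := by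
      intro j
      rw [Finset.sum_range_sub (fun i => S i), M.start S hS]
      ring
    calc ∑ j, a j * S (ν j S)
        = ∑ j, (a j * M.s0 +
            ∑ l ∈ Finset.range T, if l < ν j S then a j * (S (l + 1) - S l) else 0) := by
          refine Finset.sum_congr rfl fun j _ => ?_
          rw [htel j, mul_add, Finset.mul_sum]
          congr 1
          have hre : Finset.range (ν j S)
              = (Finset.range T).filter (fun l => l < ν j S) := by
            ext x
            simp only [Finset.mem_range, Finset.mem_filter]
            constructor
            · intro hx; exact ⟨lt_of_lt_of_le hx (hνT S hS j), hx⟩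
            · exact fun h => h.2
          rw [hre, Finset.sum_filter]
      _ = (∑ j, a j) * M.s0 + ∑ j, ∑ l ∈ Finset.range T,
            (if l < ν j S then a j * (S (l + 1) - S l) else 0) := by
          rw [Finset.sum_add_distrib, ← Finset.sum_mul]
      _ = (∑ j, a j) * M.s0 + ∑ l ∈ Finset.range T, A l S * (S (l + 1) - S l) := by
          congr 1
          rw [Finset.sum_comm]
          refine Finset.sum_congr rfl fun l _ => ?_
          rw [hA, Finset.sum_mul, Finset.sum_filter]
  rw [Market.Vbar]
  refine le_iInf fun H => le_iInf fun hH => ?_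
  refine aux_ereal _ _ fun ε hε => ?_
  set δ : ℝ := ε / (T + 1) with hδdef
  have hδ : 0 < δ := by positivity
  have key : ∀ r : ℕ, ∃ S', S' ∈ M.cond Sstar k ∧
      -((r : ℝ) * δ) ≤ ∑ l ∈ Finset.Ico k (k + r),
        (A l S' - H.pos l S') * (S' (l + 1) - S' l) := by
    intro r
    induction r with
    | zero => exact ⟨Sstar, ⟨hSstar, fun _ _ => rfl⟩, by simp⟩
    | succ r ih =>
      obtain ⟨S', ⟨hS'T, hS'ag⟩, hsum⟩ := ih
      obtain ⟨S'', ⟨hS''T, hS''ag⟩, hstep⟩ :=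
        pick_step M hloc hS'T (k + r) (A (k + r) S' - H.pos (k + r) S') δ hδ
      refine ⟨S'', ⟨hS''T, fun i hi =>
        (hS''ag i (le_trans hi (Nat.le_add_right k r))).trans (hS'ag i hi)⟩, ?_⟩
      rw [show k + (r + 1) = (k + r) + 1 by omega,
        Finset.sum_Ico_succ_top (Nat.le_add_right k r)]
      have hA1 : A (k + r) S'' = A (k + r) S' :=
        (hAcong (k + r) S' hS'T S'' hS''T hS''ag).symm
      have hH1 : H.pos (k + r) S'' = H.pos (k + r) S' :=
        (M.nonanticipative H hH (k + r) S' hS'T S'' hS''T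
          fun i hi => (hS''ag i hi).symm).symm
      have hterm : (A (k + r) S'' - H.pos (k + r) S'') * (S'' (k + r + 1) - S'' (k + r))
          = (A (k + r) S' - H.pos (k + r) S') * (S'' (k + r + 1) - S' (k + r)) := by
        rw [hA1, hH1, hS''ag (k + r) le_rfl]
      have hsum_eq : ∑ l ∈ Finset.Ico k (k + r),
            (A l S'' - H.pos l S'') * (S'' (l + 1) - S'' l)
          = ∑ l ∈ Finset.Ico k (k + r),
            (A l S' - H.pos l S') * (S' (l + 1) - S' l) := by
        refine Finset.sum_congr rfl fun l hl => ?_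
        rw [Finset.mem_Ico] at hl
        have h1 : A l S'' = A l S' :=
          (hAcong l S' hS'T S'' hS''T fun i hi =>
            hS''ag i (le_trans hi hl.2.le)).symm
        have h2 : H.pos l S'' = H.pos l S' :=
          (M.nonanticipative H hH l S' hS'T S'' hS''T
            fun i hi => (hS''ag i (le_trans hi hl.2.le)).symm).symm
        rw [h1, h2, hS''ag (l + 1) hl.2, hS''ag l hl.2.le]
      rw [hsum_eq, hterm]
      push_cast
      linarith
  obtain ⟨S', hS'mem, hsum⟩ := key (T - k)
  rw [Nat.add_sub_cancel' hkT] at hsum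
  have hεb : -ε ≤ ∑ l ∈ Finset.Ico k T, (A l S' - H.pos l S') * (S' (l + 1) - S' l) := by
    refine le_trans ?_ hsum
    have h1 : ((T - k : ℕ) : ℝ) ≤ (T : ℝ) + 1 := by
      have h2 : (T - k : ℕ) ≤ T := Nat.sub_le T k
      have h3 : ((T - k : ℕ) : ℝ) ≤ (T : ℝ) := Nat.cast_le.mpr h2
      linarith
    have h4 : ((T - k : ℕ) : ℝ) * δ ≤ ((T : ℝ) + 1) * δ :=
      mul_le_mul_of_nonneg_right h1 hδ.le
    have h5 : ((T : ℝ) + 1) * δ = ε := by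
      rw [hδdef]
      field_simp
    linarith
  obtain ⟨hS'T, hS'ag⟩ := hS'mem
  refine le_trans (EReal.coe_le_coe_iff.mpr ?_)
    (le_iSup₂ (f := fun (S'' : ℕ → ℝ) (_ : S'' ∈ M.cond Sstar k) =>
      ((Z S'' - ∑ i ∈ Finset.Ico k (H.N S''), H.pos i S'' * (S'' (i + 1) - S'' i) : ℝ)
        : EReal)) S' ⟨hS'T, hS'ag⟩)
  have hNle : H.N S' ≤ T := le_trans (hn H hH S' hS'T) hnT
  have hgains : ∑ i ∈ Finset.Ico k (H.N S'), H.pos i S' * (S' (i + 1) - S' i)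
      = ∑ i ∈ Finset.Ico k T, H.pos i S' * (S' (i + 1) - S' i) := by
    refine Finset.sum_subset (Finset.Ico_subset_Ico_right hNle) fun i hi hni => ?_
    simp only [Finset.mem_Ico] at hi hni
    have h6 : H.N S' ≤ i := by omega
    rw [M.liquidate H hH S' hS'T i h6, zero_mul]
  have habelS' := habel S' hS'T
  have hZS' := hZ S' hS'T
  have hsplitT : ∑ l ∈ Finset.range T, A l S' * (S' (l + 1) - S' l)
      = ∑ l ∈ Finset.range k, A l S' * (S' (l + 1) - S' l)
        + ∑ l ∈ Finset.Ico k T, A l S' * (S' (l + 1) - S' l) := by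
    simp only [Finset.range_eq_Ico]
    exact (Finset.sum_Ico_consecutive _ (Nat.zero_le k) hkT).symm
  have hprefix : ∑ l ∈ Finset.range k, A l S' * (S' (l + 1) - S' l)
      = ∑ l ∈ Finset.range k, A l Sstar * (Sstar (l + 1) - Sstar l) := by
    refine Finset.sum_congr rfl fun l hl => ?_
    rw [Finset.mem_range] at hl
    rw [← hAcong l Sstar hSstar S' hS'T fun i hi => hS'ag i (le_trans hi hl.le),
      hS'ag (l + 1) hl, hS'ag l hl.le]
  have hdiff : ∑ l ∈ Finset.Ico k T, (A l S' - H.pos l S') * (S' (l + 1) - S' l)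
      = ∑ l ∈ Finset.Ico k T, A l S' * (S' (l + 1) - S' l)
        - ∑ l ∈ Finset.Ico k T, H.pos l S' * (S' (l + 1) - S' l) := by
    rw [← Finset.sum_sub_distrib]
    exact Finset.sum_congr rfl fun l _ => by ring
  rw [hgains]
  linarith
end

section
/- Let ℳ = 𝒮 × ℋ be an n-bounded discrete market such that 𝒮 is locally 0-neutral, Z a function on 𝒮, S* ∈ 𝒮 fixed and k ≥ 0. If there exist b ∈ ℝ and H^b ∈ ℋ such that Z(S) ≥ Σ_{i=k}^{N_{H^b}(S)−1} H^b_i(S) Δ_i S + b for all S ∈ 𝒮_(S*,k), then V̄_k(S*, Z, ℳ) > −∞. -/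
open scoped BigOperators

/-- In a locally 0-neutral market, at any node one can find a successor trajectory
making `g` times the increment almost nonnegative. -/
lemma exists_step (M : Market) (hloc : M.LocallyZeroNeutral) (S : ℕ → ℝ) (hS : S ∈ M.T)
    (j : ℕ) (g : ℝ) (ε : ℝ) (hε : 0 < ε) :
    ∃ S₁ ∈ M.cond S j, -ε ≤ g * (S₁ (j + 1) - S j) := by
  obtain ⟨hsup, hinf⟩ := hloc S hS j
  set δ : ℝ := ε / (|g| + 1) with hδdef
  have habs : (0:ℝ) < |g| + 1 := by positivity
  have hδ : 0 < δ := by positivity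
  rcases le_or_gt 0 g with hg | hg
  · have hlt : ((-δ : ℝ) : EReal) < ⨆ S' ∈ M.cond S j, ((S' (j + 1) - S j : ℝ) : EReal) := by
      refine lt_of_lt_of_le ?_ hsup
      exact_mod_cast neg_neg_of_pos hδ
    rw [lt_iSup_iff] at hlt
    obtain ⟨S₁, hlt⟩ := hlt
    rw [lt_iSup_iff] at hlt
    obtain ⟨hS₁, hlt⟩ := hlt
    refine ⟨S₁, hS₁, ?_⟩
    have hx : -δ < S₁ (j + 1) - S j := by exact_mod_cast hlt
    have h1 : g * (-δ) ≤ g * (S₁ (j + 1) - S j) :=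
      mul_le_mul_of_nonneg_left hx.le hg
    have h2 : g * δ ≤ ε := by
      have : g ≤ |g| := le_abs_self g
      rw [hδdef]
      rw [mul_div_assoc'] at *
      rw [div_le_iff₀ habs]
      nlinarith
    nlinarith
  · have hlt : (⨅ S' ∈ M.cond S j, ((S' (j + 1) - S j : ℝ) : EReal)) < ((δ : ℝ) : EReal) := by
      refine lt_of_le_of_lt hinf ?_
      exact_mod_cast hδ
    rw [iInf_lt_iff] at hlt
    obtain ⟨S₁, hlt⟩ := hlt
    rw [iInf_lt_iff] at hlt
    obtain ⟨hS₁, hlt⟩ := hlt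
    refine ⟨S₁, hS₁, ?_⟩
    have hx : S₁ (j + 1) - S j < δ := by exact_mod_cast hlt
    have h1 : g * δ ≤ g * (S₁ (j + 1) - S j) := mul_le_mul_of_nonpos_left hx.le hg.le
    have h2 : -ε ≤ g * δ := by
      have h3 : -g ≤ |g| := neg_le_abs g
      have h4 : (-g) * δ ≤ (|g| + 1) * δ := by nlinarith
      have h5 : (|g| + 1) * δ = ε := by
        rw [hδdef]; field_simp
      nlinarith
    linarith

/-- In a locally 0-neutral market, for any non-anticipative family of coefficients one
can find a conditional trajectory whose accumulated gain is almost nonnegative. -/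
lemma exists_traj (M : Market) (hloc : M.LocallyZeroNeutral) (G : ℕ → (ℕ → ℝ) → ℝ)
    (hG : ∀ i : ℕ, ∀ S ∈ M.T, ∀ S' ∈ M.T, (∀ l ≤ i, S l = S' l) → G i S = G i S') :
    ∀ (m : ℕ) (ε : ℝ), 0 < ε → ∀ (j : ℕ), ∀ S ∈ M.T,
      ∃ S' ∈ M.cond S j,
        -ε ≤ ∑ i ∈ Finset.Ico j (j + m), G i S' * (S' (i + 1) - S' i) := by
  intro m
  induction m with
  | zero =>
    intro ε hε j S hS
    refine ⟨S, ⟨hS, fun _ _ => rfl⟩, ?_⟩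
    simp [le_of_lt hε]
  | succ m ih =>
    intro ε hε j S hS
    obtain ⟨S₁, hS₁, hstep⟩ := exists_step M hloc S hS j (G j S) (ε / 2) (by linarith)
    obtain ⟨S', hS', htail⟩ := ih (ε / 2) (by linarith) (j + 1) S₁ hS₁.1
    have hagree : ∀ l ≤ j, S' l = S l := by
      intro l hl
      rw [hS'.2 l (by omega), hS₁.2 l hl]
    refine ⟨S', ⟨hS'.1, hagree⟩, ?_⟩
    have hsplit : ∑ i ∈ Finset.Ico j (j + (m + 1)), G i S' * (S' (i + 1) - S' i)
        = G j S' * (S' (j + 1) - S' j)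
          + ∑ i ∈ Finset.Ico (j + 1) (j + 1 + m), G i S' * (S' (i + 1) - S' i) := by
      rw [show j + (m + 1) = j + 1 + m by omega]
      exact Finset.sum_eq_sum_Ico_succ_bot (by omega) _
    have hGj : G j S' = G j S := (hG j S hS S' hS'.1 (fun l hl => (hagree l hl).symm)).symm
    have hj1 : S' (j + 1) = S₁ (j + 1) := hS'.2 (j + 1) le_rfl
    have hjj : S' j = S j := hagree j le_rfl
    have hhead : -(ε / 2) ≤ G j S' * (S' (j + 1) - S' j) := by
      rw [hGj, hj1, hjj]; exact hstep
    rw [hsplit]; linarith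

/-- in an `n`-bounded market with a locally 0-neutral trajectory set, the
existence of an underhedging strategy on `𝒮_(S*,k)` implies `V̄_k(S*, Z, ℳ) > -∞`. -/
theorem finiteness_lower (n : ℕ) (M : Market) (hn : M.NBounded n)
    (hloc : M.LocallyZeroNeutral)
    (Z : (ℕ → ℝ) → ℝ) (Sstar : ℕ → ℝ) (hSstar : Sstar ∈ M.T) (k : ℕ)
    (b : ℝ) (Hb : Portfolio) (hHb : Hb ∈ M.P)
    (hsub : ∀ S ∈ M.cond Sstar k,
      ∑ i ∈ Finset.Ico k (Hb.N S), Hb.pos i S * (S (i + 1) - S i) + b ≤ Z S) :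
    ⊥ < M.Vbar k Sstar Z := by
  refine lt_of_lt_of_le (EReal.bot_lt_coe (b - 1)) ?_
  refine le_iInf₂ fun H hH => ?_
  -- the difference portfolio coefficients
  set G : ℕ → (ℕ → ℝ) → ℝ := fun i S => Hb.pos i S - H.pos i S with hGdef
  have hG : ∀ i : ℕ, ∀ S ∈ M.T, ∀ S' ∈ M.T, (∀ l ≤ i, S l = S' l) → G i S = G i S' := by
    intro i S hS S' hS' hag
    simp only [hGdef]
    rw [M.nonanticipative Hb hHb i S hS S' hS' hag,
      M.nonanticipative H hH i S hS S' hS' hag]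
  obtain ⟨S', hS', hsum⟩ := exists_traj M hloc G hG (n - k) 1 one_pos k Sstar hSstar
  set K : ℕ := k + (n - k) with hKdef
  have hnK : n ≤ K := by omega
  have hST : S' ∈ M.T := hS'.1
  have hext : ∀ (P : Portfolio), P ∈ M.P →
      ∑ i ∈ Finset.Ico k (P.N S'), P.pos i S' * (S' (i + 1) - S' i)
        = ∑ i ∈ Finset.Ico k K, P.pos i S' * (S' (i + 1) - S' i) := by
    intro P hP
    refine Finset.sum_subset ?_ ?_
    · intro i hi
      rw [Finset.mem_Ico] at *
      have := hn P hP S' hST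
      omega
    · intro i hi hni
      rw [Finset.mem_Ico] at hi
      have hNi : P.N S' ≤ i := by
        by_contra hc
        exact hni (Finset.mem_Ico.mpr ⟨hi.1, by omega⟩)
      rw [M.liquidate P hP S' hST i hNi, zero_mul]
  have hdiff : ∑ i ∈ Finset.Ico k K, G i S' * (S' (i + 1) - S' i)
      = ∑ i ∈ Finset.Ico k K, Hb.pos i S' * (S' (i + 1) - S' i)
        - ∑ i ∈ Finset.Ico k K, H.pos i S' * (S' (i + 1) - S' i) := by
    rw [← Finset.sum_sub_distrib]
    refine Finset.sum_congr rfl fun i _ => ?_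
    simp [hGdef, sub_mul]
  have hZ := hsub S' hS'
  have hreal : b - 1 ≤ Z S' - ∑ i ∈ Finset.Ico k (H.N S'), H.pos i S' * (S' (i + 1) - S' i) := by
    rw [hext H hH]
    rw [hext Hb hHb] at hZ
    rw [hdiff] at hsum
    linarith
  calc ((b - 1 : ℝ) : EReal)
      ≤ ((Z S' - ∑ i ∈ Finset.Ico k (H.N S'), H.pos i S' * (S' (i + 1) - S' i) : ℝ) : EReal) := by
        exact_mod_cast hreal
    _ ≤ ⨆ S'' ∈ M.cond Sstar k,
        ((Z S'' - ∑ i ∈ Finset.Ico k (H.N S''), H.pos i S'' * (S'' (i + 1) - S'' i) : ℝ) : EReal) :=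
        le_iSup₂_of_le S' hS' le_rfl
end

section
/- Let ℳ = 𝒮 × ℋ be an n-bounded discrete market, Z a function on 𝒮, and fix H ∈ ℋ. Then sup_{S∈𝒮} [Z(S) − Σ_{i=0}^{N_H(S)−1} H_i(S) Δ_i S] equals the n-fold nested supremum sup_{S¹∈𝒮} [−H₀(S¹) Δ₀S¹ + sup_{S²∈𝒮_(S¹,1)} [−H₁(S²) Δ₁S² + … + sup_{Sⁿ∈𝒮_(S^{n−1},n−1)} [Z(Sⁿ) − H_{n−1}(S^{n−1}) Δ_{n−1}Sⁿ] … ]]. -/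
open scoped BigOperators

lemma ereal_coe_add_iSup {ι : Sort*} (c : ℝ) (f : ι → EReal) :
    (c : EReal) + ⨆ i, f i = ⨆ i, ((c : EReal) + f i) := by
  apply le_antisymm
  · rw [add_comm, ← EReal.le_sub_iff_add_le (Or.inl (EReal.coe_ne_bot c))
      (Or.inl (EReal.coe_ne_top c))]
    apply iSup_le
    intro i
    rw [EReal.le_sub_iff_add_le (Or.inl (EReal.coe_ne_bot c)) (Or.inl (EReal.coe_ne_top c)),
      add_comm]
    exact le_iSup (fun i => (c : EReal) + f i) i
  · exact iSup_le fun i => add_le_add le_rfl (le_iSup f i)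

lemma ereal_coe_add_biSup {α : Type*} (c : ℝ) (s : Set α) (f : α → EReal) :
    (c : EReal) + ⨆ x ∈ s, f x = ⨆ x ∈ s, ((c : EReal) + f x) := by
  rw [ereal_coe_add_iSup]
  exact iSup_congr fun x => ereal_coe_add_iSup c _

lemma collapse_biSup (M : Market) (S : ℕ → ℝ) (k : ℕ) (g : (ℕ → ℝ) → EReal) :
    ⨆ S' ∈ M.cond S k, ⨆ S'' ∈ M.cond S' (k + 1), g S''
      = ⨆ S'' ∈ M.cond S k, g S'' := by
  apply le_antisymm
  · refine iSup₂_le fun S' hS' => iSup₂_le fun S'' hS'' => ?_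
    refine le_iSup₂ (f := fun S'' (_ : S'' ∈ M.cond S k) => g S'') S'' ?_
    exact ⟨hS''.1, fun i hi => (hS''.2 i (hi.trans (Nat.le_succ k))).trans (hS'.2 i hi)⟩
  · refine iSup₂_le fun S'' hS'' => ?_
    calc g S'' ≤ ⨆ S₂ ∈ M.cond S'' (k + 1), g S₂ :=
          le_iSup₂ (f := fun S₂ (_ : S₂ ∈ M.cond S'' (k + 1)) => g S₂) S''
            ⟨hS''.1, fun i _ => rfl⟩
      _ ≤ _ := le_iSup₂ (f := fun S' (_ : S' ∈ M.cond S k) =>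
            ⨆ S₂ ∈ M.cond S' (k + 1), g S₂) S'' hS''

lemma nested_eq (M : Market) (H : Portfolio) (hH : H ∈ M.P) (Z : (ℕ → ℝ) → ℝ) :
    ∀ r k (S : ℕ → ℝ), S ∈ M.T →
      nestedSup M H Z (r + 1) k S = ⨆ S' ∈ M.cond S k,
        ((Z S' - ∑ i ∈ Finset.Ico k (k + (r + 1)),
          H.pos i S' * (S' (i + 1) - S' i) : ℝ) : EReal) := by
  intro r
  induction r with
  | zero =>
    intro k S hS
    simp only [nestedSup, Nat.Ico_succ_singleton, Finset.sum_singleton]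
    refine iSup_congr fun S' => iSup_congr fun hS' => ?_
    rw [← EReal.coe_add, EReal.coe_eq_coe_iff]
    ring
  | succ r ih =>
    intro k S hS
    have step1 : nestedSup M H Z (r + 2) k S = ⨆ S' ∈ M.cond S k,
        ⨆ S'' ∈ M.cond S' (k + 1),
          (((-(H.pos k S' * (S' (k + 1) - S' k)) : ℝ) : EReal) +
            ((Z S'' - ∑ i ∈ Finset.Ico (k + 1) (k + 1 + (r + 1)),
              H.pos i S'' * (S'' (i + 1) - S'' i) : ℝ) : EReal)) := by
      show (⨆ S' ∈ M.cond S k, _) = _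
      refine iSup_congr fun S' => iSup_congr fun hS' => ?_
      rw [ih (k + 1) S' hS'.1, ereal_coe_add_biSup]
    rw [step1]
    have step2 : (⨆ S' ∈ M.cond S k, ⨆ S'' ∈ M.cond S' (k + 1),
        (((-(H.pos k S' * (S' (k + 1) - S' k)) : ℝ) : EReal) +
          ((Z S'' - ∑ i ∈ Finset.Ico (k + 1) (k + 1 + (r + 1)),
            H.pos i S'' * (S'' (i + 1) - S'' i) : ℝ) : EReal)))
        = ⨆ S' ∈ M.cond S k, ⨆ S'' ∈ M.cond S' (k + 1),
          ((Z S'' - ∑ i ∈ Finset.Ico k (k + (r + 2)),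
            H.pos i S'' * (S'' (i + 1) - S'' i) : ℝ) : EReal) := by
      refine iSup_congr fun S' => iSup_congr fun hS' => iSup_congr fun S'' =>
        iSup_congr fun hS'' => ?_
      have hpos : H.pos k S' = H.pos k S'' :=
        M.nonanticipative H hH k S' hS'.1 S'' hS''.1
          (fun l hl => (hS''.2 l (hl.trans (Nat.le_succ k))).symm)
      have h1 : S'' (k + 1) = S' (k + 1) := hS''.2 (k + 1) le_rfl
      have h0 : S'' k = S' k := hS''.2 k (Nat.le_succ k)
      rw [← EReal.coe_add, EReal.coe_eq_coe_iff]
      have hsum : ∑ i ∈ Finset.Ico k (k + (r + 2)), H.pos i S'' * (S'' (i + 1) - S'' i)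
          = H.pos k S'' * (S'' (k + 1) - S'' k) +
            ∑ i ∈ Finset.Ico (k + 1) (k + (r + 2)), H.pos i S'' * (S'' (i + 1) - S'' i) :=
        Finset.sum_eq_sum_Ico_succ_bot (by omega) _
      have : k + 1 + (r + 1) = k + (r + 2) := by omega
      rw [this] at *
      rw [hsum, hpos, h1, h0]
      ring
    rw [step2, collapse_biSup]

/-- in an `n`-bounded market (`n ≥ 1`), for a fixed portfolio `H ∈ ℋ`, the
global supremum of the hedged payoff equals the `n`-fold nested supremum. -/
theorem moving_sup_inside (n : ℕ) (hn0 : 0 < n) (M : Market) (hn : M.NBounded n)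
    (Z : (ℕ → ℝ) → ℝ) (H : Portfolio) (hH : H ∈ M.P)
    (S : ℕ → ℝ) (hS : S ∈ M.T) :
    (⨆ S' ∈ M.T,
      ((Z S' - ∑ i ∈ Finset.range (H.N S'), H.pos i S' * (S' (i + 1) - S' i) : ℝ) : EReal))
      = nestedSup M H Z n 0 S := by
  obtain ⟨m, rfl⟩ : ∃ m, n = m + 1 := ⟨n - 1, by omega⟩
  rw [nested_eq M H hH Z m 0 S hS]
  have hcond : M.cond S 0 = M.T := by
    ext S'
    constructor
    · exact fun h => h.1
    · intro h
      refine ⟨h, fun i hi => ?_⟩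
      interval_cases i
      rw [M.start S' h, M.start S hS]
  rw [hcond]
  refine iSup_congr fun S' => iSup_congr fun hS' => ?_
  congr 2
  rw [Finset.range_eq_Ico]
  apply Finset.sum_subset
  · exact Finset.Ico_subset_Ico le_rfl (by simpa using hn H hH S' hS')
  · intro i _ hi
    have : H.N S' ≤ i := by
      simp only [Finset.mem_Ico] at hi
      omega
    rw [M.liquidate H hH S' hS' i this, zero_mul]
end
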